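/- arXiv:2009.01813 — 5 statements merged into one kernel-verified Lean document; each statement's English description precedes it below -/
import Mathlib

section
/- Let K be a nonarchimedean field and A a Banach algebra over K. If A has no non-zero topological divisors of zero, then A is Jacobson-semisimple, i.e. the Jacobson radical of A is the zero ideal. Moreover, if for every spectrally reduced prime ideal p of A the quotient Banach algebra A/p (with the quotient norm) has no non-zero topological divisors of zero, then every spectrally reduced prime ideal of A is an intersection of closed maximal ideals. -/
open Filter Topology

/-- A bounded power-multiplicative (nonarchimedean, submultiplicative) ring seminorm
on a seminormed commutative ring. -/
structure IsBddPowMulSeminorm {A : Type*} [SeminormedCommRing A] (φ : A → ℝ) : Prop where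
  nonneg : ∀ f, 0 ≤ φ f
  map_zero : φ 0 = 0
  map_one : φ 1 = 1
  map_neg : ∀ f, φ (-f) = φ f
  nonarch : ∀ f g, φ (f + g) ≤ max (φ f) (φ g)
  submul : ∀ f g, φ (f * g) ≤ φ f * φ g
  pow_mul : ∀ f, ∀ n : ℕ, 1 ≤ n → φ (f ^ n) = φ f ^ n
  bounded : ∃ C > 0, ∀ f, φ f ≤ C * ‖f‖

/-- An ideal is spectrally reduced if it is the kernel of some bounded
power-multiplicative seminorm. -/
def IsSpectrallyReduced {A : Type*} [SeminormedCommRing A] (I : Ideal A) : Prop :=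
  ∃ φ : A → ℝ, IsBddPowMulSeminorm φ ∧ ∀ f, f ∈ I ↔ φ f = 0

/-- An element `x` is a topological divisor of zero if there is a sequence whose norms are
bounded away from `0` and whose products with `x` tend to `0`. -/
def IsTopDivZero {A : Type*} [SeminormedRing A] (x : A) : Prop :=
  ∃ u : ℕ → A, (∃ δ > 0, ∀ n, δ ≤ ‖u n‖) ∧ Tendsto (fun n => u n * x) atTop (nhds 0)

/-- The quotient seminorm on `A ⧸ I`: `‖y‖ = inf { ‖g‖ : g ∈ A, g + I = y }`. -/
noncomputable def quotSeminorm {A : Type*} [SeminormedCommRing A] (I : Ideal A)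
    (y : A ⧸ I) : ℝ :=
  sInf {r : ℝ | ∃ g : A, Ideal.Quotient.mk I g = y ∧ r = ‖g‖}

/-- A topological divisor of zero in the quotient `A ⧸ I` with its quotient seminorm. -/
def IsQuotTopDivZero {A : Type*} [SeminormedCommRing A] (I : Ideal A) (x : A ⧸ I) : Prop :=
  ∃ u : ℕ → A ⧸ I, (∃ δ > 0, ∀ n, δ ≤ quotSeminorm I (u n)) ∧
    Tendsto (fun n => quotSeminorm I (u n * x)) atTop (nhds 0)

lemma key_jacobson {B : Type*} [NormedCommRing B] [CompleteSpace B] (t : Bˣ)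
    (ht : 1 < ‖(t : B)‖) (ht' : ‖(t : B)‖ * ‖((t⁻¹ : Bˣ) : B)‖ = 1)
    (hB : ∀ x : B, IsTopDivZero x → x = 0) :
    Ideal.jacobson (⊥ : Ideal B) = ⊥ := by
  set T : ℝ := ‖(t : B)‖ with hT
  have hT0 : 0 < T := lt_trans one_pos ht
  have htne : (t : B) ≠ 0 := by
    intro h; rw [hT, h, norm_zero] at ht; linarith
  haveI : Nontrivial B := ⟨⟨(t : B), 0, htne⟩⟩
  have hTinv : ‖((t⁻¹ : Bˣ) : B)‖ = T⁻¹ := by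
    have h2 : T * ‖((t⁻¹ : Bˣ) : B)‖ = T * T⁻¹ := by
      rw [ht', mul_inv_cancel₀ (ne_of_gt hT0)]
    exact mul_left_cancel₀ (ne_of_gt hT0) h2
  have h1 : ‖(1 : B)‖ = 1 := by
    have hle : ‖(1 : B)‖ ≤ 1 := by
      calc ‖(1 : B)‖ = ‖(t : B) * ((t⁻¹ : Bˣ) : B)‖ := by rw [Units.mul_inv]
        _ ≤ T * ‖((t⁻¹ : Bˣ) : B)‖ := norm_mul_le _ _
        _ = 1 := ht'
    have hpos : 0 < ‖(1 : B)‖ := norm_pos_iff.mpr one_ne_zero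
    have h2 : ‖(1 : B)‖ ≤ ‖(1 : B)‖ * ‖(1 : B)‖ := by
      calc ‖(1 : B)‖ = ‖(1 : B) * 1‖ := by rw [mul_one]
        _ ≤ _ := norm_mul_le _ _
    nlinarith
  have eqnorm : ∀ a b : B, a * b = 1 → ∀ α β : ℝ, ‖a‖ ≤ α → ‖b‖ ≤ β → α * β = 1 →
      ‖a‖ = α ∧ ‖b‖ = β := by
    intro a b hab α β ha hb hαβ
    have h1' : (1 : ℝ) ≤ ‖a‖ * ‖b‖ := by
      calc (1:ℝ) = ‖(1 : B)‖ := h1.symm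
        _ = ‖a * b‖ := by rw [hab]
        _ ≤ ‖a‖ * ‖b‖ := norm_mul_le _ _
    have hna : 0 ≤ ‖a‖ := norm_nonneg _
    have hnb : 0 ≤ ‖b‖ := norm_nonneg _
    have hab' : ‖a‖ * ‖b‖ ≤ ‖a‖ * β := mul_le_mul_of_nonneg_left hb hna
    have hab'' : ‖a‖ * ‖b‖ ≤ α * ‖b‖ := mul_le_mul_of_nonneg_right ha hnb
    have hβ0 : 0 < β := by nlinarith
    have hα0 : 0 < α := by nlinarith
    constructor
    · refine le_antisymm ha ?_
      have h5 : α * β ≤ ‖a‖ * β := by rw [hαβ]; linarith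
      exact le_of_mul_le_mul_right h5 hβ0
    · refine le_antisymm hb ?_
      have h5 : β * α ≤ ‖b‖ * α := by rw [mul_comm β α, hαβ]; nlinarith
      exact le_of_mul_le_mul_right h5 hα0
  have key_pow : ∀ n : ℕ, ‖((t : B)) ^ n‖ = T ^ n ∧ ‖(((t⁻¹ : Bˣ) : B)) ^ n‖ = T⁻¹ ^ n := by
    intro n
    have hab : ((t : B)) ^ n * (((t⁻¹ : Bˣ) : B)) ^ n = 1 := by
      rw [← mul_pow, Units.mul_inv, one_pow]
    have ha : ‖((t : B)) ^ n‖ ≤ T ^ n := by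
      rcases Nat.eq_zero_or_pos n with h | h
      · simp [h, h1]
      · exact norm_pow_le' _ h
    have hb : ‖(((t⁻¹ : Bˣ) : B)) ^ n‖ ≤ T⁻¹ ^ n := by
      rcases Nat.eq_zero_or_pos n with h | h
      · simp [h, h1]
      · simpa [hTinv] using norm_pow_le' ((t⁻¹ : Bˣ) : B) h
    have hαβ : T ^ n * T⁻¹ ^ n = 1 := by
      rw [← mul_pow, mul_inv_cancel₀ (ne_of_gt hT0), one_pow]
    exact eqnorm _ _ hab _ _ ha hb hαβ
  have normz : ∀ k : ℤ, ‖((t ^ k : Bˣ) : B)‖ = T ^ k := by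
    intro k
    rcases Int.eq_nat_or_neg k with ⟨n, rfl | rfl⟩
    · rw [zpow_natCast, Units.val_pow_eq_pow_val, (key_pow n).1, zpow_natCast]
    · rw [zpow_neg, zpow_natCast, ← inv_pow, Units.val_pow_eq_pow_val, (key_pow n).2,
        zpow_neg, zpow_natCast, inv_pow]
  have scale : ∀ (k : ℤ) (z : B), ‖((t ^ k : Bˣ) : B) * z‖ = T ^ k * ‖z‖ := by
    intro k z
    have hle : ∀ (j : ℤ) (w : B), ‖((t ^ j : Bˣ) : B) * w‖ ≤ T ^ j * ‖w‖ := by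
      intro j w
      calc ‖((t ^ j : Bˣ) : B) * w‖ ≤ ‖((t ^ j : Bˣ) : B)‖ * ‖w‖ := norm_mul_le _ _
        _ = T ^ j * ‖w‖ := by rw [normz]
    refine le_antisymm (hle k z) ?_
    have h2 := hle (-k) (((t ^ k : Bˣ) : B) * z)
    have hz : ((t ^ (-k) : Bˣ) : B) * (((t ^ k : Bˣ) : B) * z) = z := by
      rw [← mul_assoc, ← Units.val_mul, ← zpow_add, neg_add_cancel, zpow_zero, Units.val_one,
        one_mul]
    rw [hz] at h2
    have hTk : (0:ℝ) < T ^ (-k) := zpow_pos hT0 _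
    rw [← mul_le_mul_iff_right₀ hTk]
    calc T ^ (-k) * (T ^ k * ‖z‖) = ‖z‖ := by
          rw [← mul_assoc, ← zpow_add₀ (ne_of_gt hT0), neg_add_cancel, zpow_zero, one_mul]
      _ ≤ T ^ (-k) * ‖((t ^ k : Bˣ) : B) * z‖ := h2
  have hcast : ∀ n : ℕ, ((t ^ (-(n:ℤ)) : Bˣ) : B) = (((t⁻¹ : Bˣ) : B)) ^ n := by
    intro n
    rw [zpow_neg, zpow_natCast, ← inv_pow, Units.val_pow_eq_pow_val]
  -- main argument
  refine le_antisymm ?_ bot_le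
  intro x hx
  rw [Ideal.mem_bot]
  have hu : ∀ y : B, IsUnit (x * y + 1) := Ideal.mem_jacobson_bot.mp hx
  have hxnu : ¬ IsUnit x := by
    rintro ⟨w, rfl⟩
    have h2 := hu (-((w⁻¹ : Bˣ) : B))
    have h3 : (w : B) * (-((w⁻¹ : Bˣ) : B)) + 1 = 0 := by
      rw [mul_neg, Units.mul_inv]; ring
    rw [h3] at h2
    exact not_isUnit_zero h2
  have hvn : ∀ n : ℕ, IsUnit ((((t⁻¹ : Bˣ) : B)) ^ n - x) := by
    intro n
    have hinv : (((t⁻¹ : Bˣ) : B)) ^ n * ((t : B)) ^ n = 1 := by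
      rw [← mul_pow, Units.inv_mul, one_pow]
    have h2 : (((t⁻¹ : Bˣ) : B)) ^ n * (x * (-((t : B)) ^ n) + 1)
        = (((t⁻¹ : Bˣ) : B)) ^ n - x := by
      linear_combination (-x) * hinv
    rw [← h2]
    exact ((t⁻¹).isUnit.pow n).mul (hu _)
  set z : ℕ → B := fun n => ↑((hvn n).unit)⁻¹ with hzdef
  have hz1 : ∀ n, z n * ((((t⁻¹ : Bˣ) : B)) ^ n - x) = 1 := by
    intro n
    have := Units.inv_mul (hvn n).unit
    rwa [(hvn n).unit_spec] at this
  have hzx : ∀ n, z n * x = (((t⁻¹ : Bˣ) : B)) ^ n * z n - 1 := by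
    intro n
    linear_combination (-1 : B) * hz1 n
  have hzpos : ∀ n, 0 < ‖z n‖ := fun n => norm_pos_iff.mpr (Units.ne_zero _)
  by_cases hcase : ∃ n, ‖(((t⁻¹ : Bˣ) : B)) ^ n * z n‖ < 1
  · obtain ⟨n, hn⟩ := hcase
    have h2 : ‖(1 : B) - (-(z n * x))‖ < 1 := by
      have : (1 : B) - (-(z n * x)) = (((t⁻¹ : Bˣ) : B)) ^ n * z n := by
        rw [hzx n]; ring
      rwa [this]
    have h3 : IsUnit (-(z n * x)) := by
      have := isUnit_one_sub_of_norm_lt_one (x := (1 : B) - (-(z n * x))) h2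
      simpa using this
    have h4 : IsUnit (z n * x) := by
      rw [← IsUnit.neg_iff]; exact h3
    exact absurd (isUnit_of_mul_isUnit_right h4) hxnu
  · push_neg at hcase
    have hnorm_eq : ∀ n : ℕ, ‖(((t⁻¹ : Bˣ) : B)) ^ n * z n‖ = T ^ (-(n:ℤ)) * ‖z n‖ := by
      intro n; rw [← hcast n, scale]
    have hzlb : ∀ n : ℕ, (1:ℝ) ≤ T ^ (-(n:ℤ)) * ‖z n‖ := by
      intro n; rw [← hnorm_eq n]; exact hcase n
    have hchoice : ∀ n : ℕ, ∃ k : ℤ, T ^ k ≤ ‖z n‖⁻¹ ∧ ‖z n‖⁻¹ < T ^ (k + 1) := by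
      intro n
      obtain ⟨k, hk⟩ := exists_mem_Ico_zpow (inv_pos.mpr (hzpos n)) ht
      exact ⟨k, hk.1, hk.2⟩
    choose k hk1 hk2 using hchoice
    set u : ℕ → B := fun n => ((t ^ (k n + 1) : Bˣ) : B) * z n with hudef
    have hunorm : ∀ n, ‖u n‖ = T ^ (k n + 1) * ‖z n‖ := fun n => scale _ _
    have hulb : ∀ n, (1:ℝ) ≤ ‖u n‖ := by
      intro n
      rw [hunorm n]
      have h2 := mul_lt_mul_of_pos_right (hk2 n) (hzpos n)
      rw [inv_mul_cancel₀ (hzpos n).ne'] at h2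
      exact h2.le
    have hux : ∀ n, u n * x = ((t ^ (k n + 1) : Bˣ) : B) * ((((t⁻¹ : Bˣ) : B)) ^ n * z n - 1) := by
      intro n
      rw [hudef]
      simp only [mul_assoc]
      rw [hzx n]
    have hbound : ∀ n, ‖u n * x‖ ≤ 2 * T * (T⁻¹) ^ n := by
      intro n
      have hC : (0:ℝ) < T ^ (k n + 1) := zpow_pos hT0 _
      have hP : (0:ℝ) < T ^ (-(n:ℤ)) := zpow_pos hT0 _
      have hZ : (0:ℝ) < ‖z n‖ := hzpos n
      have ha : ‖u n * x‖ ≤ T ^ (k n + 1) * (T ^ (-(n:ℤ)) * ‖z n‖ + 1) := by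
        rw [hux n, scale]
        have := norm_sub_le ((((t⁻¹ : Bˣ) : B)) ^ n * z n) 1
        rw [hnorm_eq n, h1] at this
        exact mul_le_mul_of_nonneg_left this hC.le
      have hCZ : T ^ (k n + 1) * ‖z n‖ ≤ T := by
        have h2 := mul_le_mul_of_nonneg_right (hk1 n) hZ.le
        rw [inv_mul_cancel₀ hZ.ne'] at h2
        have h3 : T ^ (k n + 1) = T ^ (k n) * T := by
          rw [zpow_add_one₀ (ne_of_gt hT0)]
        nlinarith
      have hPZ : (1:ℝ) ≤ T ^ (-(n:ℤ)) * ‖z n‖ := hzlb n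
      have hgoal : (T⁻¹:ℝ) ^ n = T ^ (-(n:ℤ)) := by
        rw [inv_pow, ← zpow_natCast T n, ← zpow_neg]
      rw [hgoal]
      nlinarith [mul_le_mul_of_nonneg_left hPZ hC.le,
        mul_le_mul_of_nonneg_left hCZ (by positivity : (0:ℝ) ≤ 2 * T ^ (-(n:ℤ)))]
    have htends : Tendsto (fun n => u n * x) atTop (nhds 0) := by
      rw [tendsto_zero_iff_norm_tendsto_zero]
      apply squeeze_zero (fun n => norm_nonneg _) hbound
      have h2 : Tendsto (fun n : ℕ => (T⁻¹) ^ n) atTop (nhds 0) :=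
        tendsto_pow_atTop_nhds_zero_of_lt_one (by positivity) (inv_lt_one_of_one_lt₀ ht)
      simpa using h2.const_mul (2 * T)
    exact hB x ⟨u, ⟨1, one_pos, hulb⟩, htends⟩

/-- A Banach algebra over a nonarchimedean field with no non-zero topological divisors of
zero is Jacobson-semisimple; and if every quotient by a spectrally reduced prime ideal has
no non-zero topological divisors of zero, then every spectrally reduced prime ideal is an
intersection of closed maximal ideals. -/
theorem jacobson_semisimple_of_no_topDivZero {K A : Type*}
    [NontriviallyNormedField K] [CompleteSpace K]
    (hK : IsNonarchimedean (fun x : K => ‖x‖))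
    [NormedCommRing A] [NormOneClass A] [NormedAlgebra K A] [CompleteSpace A]
    (hA : IsNonarchimedean (fun a : A => ‖a‖)) :
    ((∀ x : A, IsTopDivZero x → x = 0) → Ideal.jacobson (⊥ : Ideal A) = ⊥) ∧
    ((∀ p : Ideal A, p.IsPrime → IsSpectrallyReduced p →
        ∀ x : A ⧸ p, IsQuotTopDivZero p x → x = 0) →
      ∀ p : Ideal A, p.IsPrime → IsSpectrallyReduced p →
        p = sInf {m : Ideal A | p ≤ m ∧ m.IsMaximal ∧ IsClosed (m : Set A)}) := by
  obtain ⟨w, hw⟩ := NormedField.exists_one_lt_norm K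
  have hw0 : w ≠ 0 := by
    intro h; rw [h, norm_zero] at hw; linarith
  have hwpos : (0:ℝ) < ‖w‖ := lt_trans one_pos hw
  set t : Aˣ := Units.map (algebraMap K A).toMonoidHom (Units.mk0 w hw0) with htdef
  have htval : (t : A) = algebraMap K A w := rfl
  have htinv : ((t⁻¹ : Aˣ) : A) = algebraMap K A w⁻¹ := rfl
  have htnorm : ‖(t : A)‖ = ‖w‖ := by rw [htval, norm_algebraMap']
  have htinvnorm : ‖((t⁻¹ : Aˣ) : A)‖ = ‖w‖⁻¹ := by rw [htinv, norm_algebraMap', norm_inv]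
  constructor
  · intro h
    exact key_jacobson t (by rw [htnorm]; exact hw)
      (by rw [htnorm, htinvnorm, mul_inv_cancel₀ (ne_of_gt hwpos)]) h
  · intro h p hp hsp
    obtain ⟨φ, hφ, hker⟩ := hsp
    obtain ⟨C, hC0, hCb⟩ := hφ.bounded
    -- p is closed
    have hlip : ∀ f g : A, φ f - φ g ≤ C * ‖f - g‖ := by
      intro f g
      have h2 : φ f ≤ max (φ (f - g)) (φ g) := by
        have := hφ.nonarch (f - g) g
        rwa [sub_add_cancel] at this
      have h3 : φ (f - g) ≤ C * ‖f - g‖ := hCb _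
      have hg0 := hφ.nonneg g
      rcases max_cases (φ (f - g)) (φ g) with ⟨he, _⟩ | ⟨he, _⟩ <;> rw [he] at h2
      · linarith
      · have := mul_nonneg hC0.le (norm_nonneg (f - g)); linarith
    have hcont : Continuous φ := by
      refine (LipschitzWith.of_dist_le_mul (K := ⟨C, hC0.le⟩) fun f g => ?_).continuous
      simp only [Real.dist_eq, dist_eq_norm, NNReal.coe_mk]
      have h2 := hlip f g
      have h3 := hlip g f
      rw [show g - f = -(f - g) by ring, norm_neg] at h3
      rw [Real.norm_eq_abs, abs_sub_le_iff]
      exact ⟨h2, h3⟩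
    haveI hclosed : IsClosed (p : Set A) := by
      have : (p : Set A) = φ ⁻¹' {0} := by
        ext f; simp [hker f]
      rw [this]
      exact IsClosed.preimage hcont isClosed_singleton
    haveI : Nontrivial (A ⧸ p) := Ideal.Quotient.nontrivial_iff.mpr hp.ne_top
    -- quotSeminorm is the quotient norm
    have hqs : ∀ y : A ⧸ p, quotSeminorm p y = ‖y‖ := by
      intro y
      obtain ⟨g₀, hg₀⟩ := Ideal.Quotient.mk_surjective (I := p) y
      have hne : {r : ℝ | ∃ g : A, Ideal.Quotient.mk p g = y ∧ r = ‖g‖}.Nonempty :=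
        ⟨‖g₀‖, g₀, hg₀, rfl⟩
      have hbdd : BddBelow {r : ℝ | ∃ g : A, Ideal.Quotient.mk p g = y ∧ r = ‖g‖} :=
        ⟨0, by rintro r ⟨g, _, rfl⟩; exact norm_nonneg g⟩
      refine le_antisymm ?_ ?_
      · refine le_of_forall_pos_le_add fun ε hε => ?_
        obtain ⟨g, hg, hglt⟩ := Ideal.Quotient.norm_mk_lt y hε
        exact le_trans (csInf_le hbdd ⟨g, hg, rfl⟩) hglt.le
      · refine le_csInf hne ?_
        rintro r ⟨g, hg, rfl⟩
        rw [← hg]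
        exact Ideal.Quotient.norm_mk_le p g
    -- the unit in the quotient
    set tq : (A ⧸ p)ˣ := Units.map (Ideal.Quotient.mk p).toMonoidHom t with htqdef
    have htqval : (tq : A ⧸ p) = Ideal.Quotient.mk p (t : A) := rfl
    have htqinv : ((tq⁻¹ : (A ⧸ p)ˣ) : A ⧸ p) = Ideal.Quotient.mk p ((t⁻¹ : Aˣ) : A) := rfl
    have ha_le : ‖(tq : A ⧸ p)‖ ≤ ‖w‖ := by
      rw [htqval]
      exact le_trans (Ideal.Quotient.norm_mk_le p _) (le_of_eq htnorm)
    have hb_le : ‖((tq⁻¹ : (A ⧸ p)ˣ) : A ⧸ p)‖ ≤ ‖w‖⁻¹ := by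
      rw [htqinv]
      exact le_trans (Ideal.Quotient.norm_mk_le p _) (le_of_eq htinvnorm)
    have h1q : ‖(1 : A ⧸ p)‖ = 1 := by
      have hle : ‖(1 : A ⧸ p)‖ ≤ 1 := by
        have : (1 : A ⧸ p) = Ideal.Quotient.mk p 1 := rfl
        rw [this]
        exact le_trans (Ideal.Quotient.norm_mk_le p 1) (le_of_eq norm_one)
      have hpos : 0 < ‖(1 : A ⧸ p)‖ := norm_pos_iff.mpr one_ne_zero
      have h2 : ‖(1 : A ⧸ p)‖ ≤ ‖(1 : A ⧸ p)‖ * ‖(1 : A ⧸ p)‖ := by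
        calc ‖(1 : A ⧸ p)‖ = ‖(1 : A ⧸ p) * 1‖ := by rw [mul_one]
          _ ≤ _ := norm_mul_le _ _
      nlinarith
    have hprod_ge : (1:ℝ) ≤ ‖(tq : A ⧸ p)‖ * ‖((tq⁻¹ : (A ⧸ p)ˣ) : A ⧸ p)‖ := by
      calc (1:ℝ) = ‖(1 : A ⧸ p)‖ := h1q.symm
        _ = ‖(tq : A ⧸ p) * ((tq⁻¹ : (A ⧸ p)ˣ) : A ⧸ p)‖ := by rw [Units.mul_inv]
        _ ≤ _ := norm_mul_le _ _
    have hprod_eq : ‖(tq : A ⧸ p)‖ * ‖((tq⁻¹ : (A ⧸ p)ˣ) : A ⧸ p)‖ = 1 := by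
      refine le_antisymm ?_ hprod_ge
      calc ‖(tq : A ⧸ p)‖ * ‖((tq⁻¹ : (A ⧸ p)ˣ) : A ⧸ p)‖ ≤ ‖w‖ * ‖w‖⁻¹ :=
            mul_le_mul ha_le hb_le (norm_nonneg _) hwpos.le
        _ = 1 := mul_inv_cancel₀ (ne_of_gt hwpos)
    have htq_lt : 1 < ‖(tq : A ⧸ p)‖ := by
      have h2 : ‖(tq : A ⧸ p)‖ * ‖((tq⁻¹ : (A ⧸ p)ˣ) : A ⧸ p)‖
          ≤ ‖(tq : A ⧸ p)‖ * ‖w‖⁻¹ :=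
        mul_le_mul_of_nonneg_left hb_le (norm_nonneg _)
      have h3 : (0:ℝ) < ‖w‖⁻¹ := inv_pos.mpr hwpos
      nlinarith [mul_le_mul_of_nonneg_right (le_trans hprod_ge h2) hwpos.le,
        mul_inv_cancel₀ (ne_of_gt hwpos), norm_nonneg ((tq : A ⧸ p))]
    -- transfer the hypothesis
    have hB : ∀ x : A ⧸ p, IsTopDivZero x → x = 0 := by
      rintro x ⟨u, ⟨δ, hδ, hlb⟩, htend⟩
      refine h p hp ⟨φ, hφ, hker⟩ x ⟨u, ⟨δ, hδ, fun n => ?_⟩, ?_⟩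
      · rw [hqs]; exact hlb n
      · simp only [hqs]
        exact tendsto_zero_iff_norm_tendsto_zero.mp htend
    have hjac : p.jacobson = p :=
      Ideal.jacobson_eq_iff_jacobson_quotient_eq_bot.mpr (key_jacobson tq htq_lt hprod_eq hB)
    have hset : {m : Ideal A | p ≤ m ∧ m.IsMaximal ∧ IsClosed (m : Set A)}
        = {m : Ideal A | p ≤ m ∧ m.IsMaximal} := by
      ext m
      constructor
      · rintro ⟨h1, h2, _⟩; exact ⟨h1, h2⟩
      · rintro ⟨h1, h2⟩
        refine ⟨h1, h2, ?_⟩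
        haveI := h2
        exact Ideal.IsMaximal.isClosed
    rw [hset]
    exact hjac.symm
end

section
/- Let A be a normed ring and let x ∈ A be an element that is not a divisor of zero. Then the multiplication map A → A, a ↦ ax, is strict (i.e. it is an open map from A onto its image xA, the image being endowed with the subspace topology) if and only if x is not a topological divisor of zero. -/
open Filter Topology

/-- For a non-zero-divisor `x` in a normed ring, the multiplication map `a ↦ a·x` is strict
(open onto its image) iff `x` is not a topological divisor of zero. -/
theorem mul_strict_iff_not_topDivZero {A : Type*} [NormedCommRing A] [NormOneClass A]
    (hA : IsNonarchimedean (fun a : A => ‖a‖))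
    (x : A) (hx0 : x ≠ 0) (hx : ∀ a : A, a * x = 0 → a = 0) :
    IsOpenMap (Set.rangeFactorization (fun a : A => a * x)) ↔ ¬ IsTopDivZero x := by
  set f : A → Set.range (fun a : A => a * x) :=
    Set.rangeFactorization (fun a : A => a * x) with hf
  constructor
  · intro hopen htdz
    obtain ⟨u, ⟨δ, hδ, hu⟩, hlim⟩ := htdz
    have h0 : IsOpen (f '' Metric.ball 0 δ) := hopen _ Metric.isOpen_ball
    have hmem : f 0 ∈ f '' Metric.ball 0 δ :=
      Set.mem_image_of_mem _ (by simpa using hδ)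
    rw [Metric.isOpen_iff] at h0
    obtain ⟨δ', hδ', hball⟩ := h0 _ hmem
    obtain ⟨n, hn⟩ := (hlim.eventually (Metric.ball_mem_nhds 0 hδ')).exists
    have hy : (⟨u n * x, ⟨u n, rfl⟩⟩ : Set.range (fun a : A => a * x)) ∈
        Metric.ball (f 0) δ' := by
      have h1 : dist (u n * x) ((0 : A) * x) < δ' := by
        simpa [dist_eq_norm] using hn
      simpa [Metric.mem_ball, Subtype.dist_eq, f, Set.rangeFactorization] using h1
    obtain ⟨a, ha, hfa⟩ := hball hy
    have hax : a * x = u n * x := congrArg Subtype.val hfa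
    have heq : a = u n :=
      sub_eq_zero.mp (hx _ (by rw [sub_mul, hax, sub_self]))
    have hlt : ‖u n‖ < δ := by
      rw [← heq]; simpa using ha
    exact absurd (hu n) (not_le.mpr hlt)
  · intro htdz
    have key : ∀ ε > (0 : ℝ), ∃ δ > (0 : ℝ), ∀ a : A, ‖a * x‖ < δ → ‖a‖ < ε := by
      intro ε hε
      by_contra h
      push_neg at h
      choose u hu1 hu2 using fun n : ℕ => h (1 / (n + 1)) (by positivity)
      refine htdz ⟨u, ⟨ε, hε, hu2⟩, ?_⟩
      rw [tendsto_zero_iff_norm_tendsto_zero]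
      exact squeeze_zero (fun n => norm_nonneg _) (fun n => (hu1 n).le)
        tendsto_one_div_add_atTop_nhds_zero_nat
    intro U hU
    rw [Metric.isOpen_iff]
    rintro _ ⟨a, haU, rfl⟩
    obtain ⟨ε, hε, hballU⟩ := Metric.isOpen_iff.mp hU a haU
    obtain ⟨δ, hδ, hkey⟩ := key ε hε
    refine ⟨δ, hδ, ?_⟩
    rintro ⟨_, b, rfl⟩ hyb
    have hdist : ‖b * x - a * x‖ < δ := by
      simpa [Metric.mem_ball, Subtype.dist_eq, dist_eq_norm, f, Set.rangeFactorization]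
        using hyb
    have hba : ‖b - a‖ < ε := hkey _ (by rwa [sub_mul])
    refine ⟨b, hballU ?_, rfl⟩
    simpa [Metric.mem_ball, dist_eq_norm] using hba
end

section
/- Let (A, ‖·‖) be a seminormed ring and let φ be a seminorm on A that is continuous with respect to the topology defined by ‖·‖. Suppose there exists a topologically nilpotent unit ϖ ∈ A^× that is multiplicative for both ‖·‖ and φ, i.e. ‖ϖf‖ = ‖ϖ‖·‖f‖ and φ(ϖf) = φ(ϖ)·φ(f) for all f ∈ A. Then there exist real numbers s > 0 and C > 0 such that φ(f)^s ≤ C·‖f‖ for all f ∈ A; that is, the seminorm φ^s is bounded with respect to ‖·‖. -/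
open Filter Topology

/-- A (nonarchimedean, submultiplicative) ring seminorm. -/
structure IsRingSeminormFun {A : Type*} [CommRing A] (φ : A → ℝ) : Prop where
  nonneg : ∀ f, 0 ≤ φ f
  map_zero : φ 0 = 0
  map_one : φ 1 = 1
  map_neg : ∀ f, φ (-f) = φ f
  nonarch : ∀ f g, φ (f + g) ≤ max (φ f) (φ g)
  submul : ∀ f g, φ (f * g) ≤ φ f * φ g

/-- If a continuous seminorm `φ` on a seminormed ring admits a topologically nilpotent unit
`ϖ` multiplicative for both the ambient seminorm and `φ`, then some power `φ^s` of `φ` is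
bounded. -/
theorem pow_of_continuous_seminorm_bounded {A : Type*} [SeminormedCommRing A]
    [NormOneClass A] (hA : IsNonarchimedean (fun a : A => ‖a‖))
    (φ : A → ℝ) (hφ : IsRingSeminormFun φ) (hφcont : Continuous φ)
    (ϖ : A) (hϖunit : IsUnit ϖ)
    (hϖnil : Tendsto (fun n : ℕ => ϖ ^ n) atTop (nhds 0))
    (hϖnorm : ∀ f : A, ‖ϖ * f‖ = ‖ϖ‖ * ‖f‖)
    (hϖφ : ∀ f : A, φ (ϖ * f) = φ ϖ * φ f) :
    ∃ s : ℝ, 0 < s ∧ ∃ C : ℝ, 0 < C ∧ ∀ f : A, (φ f) ^ s ≤ C * ‖f‖ := by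
  obtain ⟨u, hu⟩ := hϖunit
  set a := ‖ϖ‖ with ha_def
  set b := φ ϖ with hb_def
  -- powers
  have hnorm_pow : ∀ (n : ℕ) (f : A), ‖ϖ ^ n * f‖ = a ^ n * ‖f‖ := by
    intro n
    induction n with
    | zero => intro f; simp
    | succ n ih =>
      intro f
      rw [pow_succ, mul_comm (ϖ ^ n) ϖ, mul_assoc, hϖnorm, ih, pow_succ]
      ring
  have hφ_pow : ∀ (n : ℕ) (f : A), φ (ϖ ^ n * f) = b ^ n * φ f := by
    intro n
    induction n with
    | zero => intro f; simp
    | succ n ih =>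
      intro f
      rw [pow_succ, mul_comm (ϖ ^ n) ϖ, mul_assoc, hϖφ, ih, pow_succ]
      ring
  have ha_pos : 0 < a := by
    have h1 : a * ‖((u⁻¹ : Aˣ) : A)‖ = 1 := by
      rw [← hϖnorm, ← hu, Units.mul_inv, norm_one]
    nlinarith [norm_nonneg ((u⁻¹ : Aˣ) : A), norm_nonneg ϖ]
  have hb_pos : 0 < b := by
    have h1 : b * φ ((u⁻¹ : Aˣ) : A) = 1 := by
      rw [← hϖφ, ← hu, Units.mul_inv, hφ.map_one]
    nlinarith [hφ.nonneg ((u⁻¹ : Aˣ) : A), hφ.nonneg ϖ]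
  have hapow : ∀ n : ℕ, ‖ϖ ^ n‖ = a ^ n := by
    intro n; have := hnorm_pow n 1; rwa [mul_one, norm_one, mul_one] at this
  have hbpow : ∀ n : ℕ, φ (ϖ ^ n) = b ^ n := by
    intro n; have := hφ_pow n 1; rwa [mul_one, hφ.map_one, mul_one] at this
  have ha1 : a < 1 := by
    have h := (continuous_norm.tendsto (0 : A)).comp hϖnil
    rw [norm_zero] at h
    have heq : (fun n : ℕ => a ^ n) = (fun x : A => ‖x‖) ∘ (fun n : ℕ => ϖ ^ n) := by
      funext n; exact (hapow n).symm
    have h' : Tendsto (fun n : ℕ => a ^ n) atTop (nhds 0) := heq ▸ h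
    have := tendsto_pow_atTop_nhds_zero_iff.mp h'
    rwa [abs_of_pos ha_pos] at this
  have hb1 : b < 1 := by
    have h := (hφcont.tendsto (0 : A)).comp hϖnil
    rw [hφ.map_zero] at h
    have heq : (fun n : ℕ => b ^ n) = φ ∘ (fun n : ℕ => ϖ ^ n) := by
      funext n; exact (hbpow n).symm
    have h' : Tendsto (fun n : ℕ => b ^ n) atTop (nhds 0) := heq ▸ h
    have := tendsto_pow_atTop_nhds_zero_iff.mp h'
    rwa [abs_of_pos hb_pos] at this
  -- continuity at zero
  obtain ⟨δ, hδ_pos, hδ⟩ : ∃ δ > 0, ∀ g : A, ‖g‖ < δ → φ g < 1 := by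
    have h0 : Tendsto φ (nhds (0 : A)) (nhds 0) := by
      have := hφcont.tendsto 0; rwa [hφ.map_zero] at this
    have h1 : ∀ᶠ g in nhds (0 : A), φ g < 1 := h0.eventually_lt_const one_pos
    rw [Metric.eventually_nhds_iff] at h1
    obtain ⟨ε, hε, h⟩ := h1
    exact ⟨ε, hε, fun g hg => h (by simpa [dist_zero_right] using hg)⟩
  -- zpowers
  have hnorm_zpow : ∀ (n : ℤ) (f : A), ‖(↑(u ^ n) : A) * f‖ = a ^ n * ‖f‖ := by
    intro n f
    cases n with
    | ofNat k =>
      have hcv : (↑(u ^ (Int.ofNat k)) : A) = ϖ ^ k := by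
        rw [show (Int.ofNat k) = (k : ℤ) from rfl, zpow_natCast,
          Units.val_pow_eq_pow_val, hu]
      rw [hcv]
      exact hnorm_pow k f
    | negSucc k =>
      have hexp : ((k + 1 : ℕ) : ℤ) + Int.negSucc k = 0 := by
        rw [Int.negSucc_eq]; push_cast; ring
      have hinv : u ^ (k + 1) * u ^ (Int.negSucc k) = 1 := by
        rw [← zpow_natCast u (k + 1), ← zpow_add, hexp, zpow_zero]
      have key : ϖ ^ (k + 1) * ((↑(u ^ Int.negSucc k) : A) * f) = f := by
        rw [← hu, ← Units.val_pow_eq_pow_val, ← mul_assoc, ← Units.val_mul, hinv,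
          Units.val_one, one_mul]
      have h := hnorm_pow (k + 1) ((↑(u ^ Int.negSucc k) : A) * f)
      rw [key] at h
      have hak : (0 : ℝ) < a ^ (k + 1) := pow_pos ha_pos _
      rw [h, show (a : ℝ) ^ Int.negSucc k = (a ^ (k + 1))⁻¹ from zpow_negSucc a k,
        ← mul_assoc, inv_mul_cancel₀ hak.ne', one_mul]
  have hφ_zpow : ∀ (n : ℤ) (f : A), φ ((↑(u ^ n) : A) * f) = b ^ n * φ f := by
    intro n f
    cases n with
    | ofNat k =>
      have hcv : (↑(u ^ (Int.ofNat k)) : A) = ϖ ^ k := by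
        rw [show (Int.ofNat k) = (k : ℤ) from rfl, zpow_natCast,
          Units.val_pow_eq_pow_val, hu]
      rw [hcv]
      exact hφ_pow k f
    | negSucc k =>
      have hexp : ((k + 1 : ℕ) : ℤ) + Int.negSucc k = 0 := by
        rw [Int.negSucc_eq]; push_cast; ring
      have hinv : u ^ (k + 1) * u ^ (Int.negSucc k) = 1 := by
        rw [← zpow_natCast u (k + 1), ← zpow_add, hexp, zpow_zero]
      have key : ϖ ^ (k + 1) * ((↑(u ^ Int.negSucc k) : A) * f) = f := by
        rw [← hu, ← Units.val_pow_eq_pow_val, ← mul_assoc, ← Units.val_mul, hinv,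
          Units.val_one, one_mul]
      have h := hφ_pow (k + 1) ((↑(u ^ Int.negSucc k) : A) * f)
      rw [key] at h
      have hbk : (0 : ℝ) < b ^ (k + 1) := pow_pos hb_pos _
      rw [h, show (b : ℝ) ^ Int.negSucc k = (b ^ (k + 1))⁻¹ from zpow_negSucc b k,
        ← mul_assoc, inv_mul_cancel₀ hbk.ne', one_mul]
  -- the exponent
  set s := Real.logb b a with hs_def
  have hs : 0 < s := Real.logb_pos_of_base_lt_one hb_pos hb1 ha_pos ha1
  have hbs : b ^ s = a := Real.rpow_logb hb_pos (ne_of_lt hb1) ha_pos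
  refine ⟨s, hs, (δ * a)⁻¹, inv_pos.mpr (mul_pos hδ_pos ha_pos), fun f => ?_⟩
  rcases (norm_nonneg f).lt_or_eq with hf | hf
  · -- ‖f‖ > 0 case
    obtain ⟨n, hn1, hn2⟩ := exists_mem_Ico_zpow (x := ‖f‖ / δ) (y := a⁻¹)
      (div_pos hf hδ_pos) (one_lt_inv_iff₀.mpr ⟨ha_pos, ha1⟩)
    set m := n + 1 with hm_def
    have hzm : (0 : ℝ) < a ^ m := zpow_pos ha_pos m
    have hgnorm : ‖(↑(u ^ m) : A) * f‖ = a ^ m * ‖f‖ := hnorm_zpow m f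
    have hglt : a ^ m * ‖f‖ < δ := by
      have : ‖f‖ / δ < (a⁻¹) ^ m := hn2
      rw [inv_zpow, ← zpow_neg] at this
      rw [div_lt_iff₀ hδ_pos] at this
      have h2 := mul_lt_mul_of_pos_left this hzm
      calc a ^ m * ‖f‖ < a ^ m * (a ^ (-m) * δ) := h2
        _ = δ := by rw [← mul_assoc, ← zpow_add₀ (ne_of_gt ha_pos)]; simp
    have hgge : δ * a ≤ a ^ m * ‖f‖ := by
      have : (a⁻¹) ^ n ≤ ‖f‖ / δ := hn1
      rw [inv_zpow, ← zpow_neg, le_div_iff₀ hδ_pos] at this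
      have h2 := mul_le_mul_of_nonneg_left this hzm.le
      calc δ * a = a ^ m * (a ^ (-n) * δ) := by
            rw [← mul_assoc, ← zpow_add₀ (ne_of_gt ha_pos)]
            have : m + -n = 1 := by omega
            rw [this, zpow_one]; ring
        _ ≤ a ^ m * ‖f‖ := h2
    have hφg : φ ((↑(u ^ m) : A) * f) < 1 := hδ _ (by rw [hgnorm]; exact hglt)
    have hφf : φ f < b ^ (-m) := by
      have hback : (↑(u ^ (-m)) : A) * ((↑(u ^ m) : A) * f) = f := by
        rw [← mul_assoc, ← Units.val_mul, ← zpow_add]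
        simp
      have := hφ_zpow (-m) ((↑(u ^ m) : A) * f)
      rw [hback] at this
      rw [this]
      calc b ^ (-m) * φ ((↑(u ^ m) : A) * f) < b ^ (-m) * 1 :=
            mul_lt_mul_of_pos_left hφg (zpow_pos hb_pos _)
        _ = b ^ (-m) := mul_one _
    -- now take rpow
    have hstep : φ f ^ s ≤ a ^ (-m) := by
      have h1 : φ f ^ s ≤ (b ^ (-m : ℤ)) ^ s :=
        Real.rpow_le_rpow (hφ.nonneg f) hφf.le hs.le
      have h2 : ((b : ℝ) ^ (-m : ℤ)) ^ s = a ^ (-m : ℤ) := by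
        rw [← Real.rpow_intCast b (-m), ← Real.rpow_mul hb_pos.le, mul_comm,
          Real.rpow_mul hb_pos.le, hbs, Real.rpow_intCast]
      rwa [h2] at h1
    have hδa : (0 : ℝ) < δ * a := mul_pos hδ_pos ha_pos
    have hfin : a ^ (-m : ℤ) ≤ (δ * a)⁻¹ * ‖f‖ := by
      have h4 : (a ^ m)⁻¹ * (δ * a) ≤ ‖f‖ := by
        calc (a ^ m)⁻¹ * (δ * a) ≤ (a ^ m)⁻¹ * (a ^ m * ‖f‖) :=
              mul_le_mul_of_nonneg_left hgge (inv_nonneg.mpr hzm.le)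
          _ = ‖f‖ := inv_mul_cancel_left₀ hzm.ne' _
      calc a ^ (-m : ℤ) = (δ * a)⁻¹ * ((a ^ m)⁻¹ * (δ * a)) := by
            rw [mul_comm ((a ^ m)⁻¹) (δ * a), inv_mul_cancel_left₀ hδa.ne', zpow_neg]
        _ ≤ (δ * a)⁻¹ * ‖f‖ := mul_le_mul_of_nonneg_left h4 (inv_nonneg.mpr hδa.le)
    linarith [hstep, hfin]
  · -- ‖f‖ = 0 case
    have hφf : φ f = 0 := by
      have hb_le : ∀ n : ℕ, φ f ≤ b ^ n := by
        intro n
        have hback : ϖ ^ n * ((↑(u ^ (-(n : ℤ))) : A) * f) = f := by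
          rw [← hu, ← Units.val_pow_eq_pow_val, ← mul_assoc, ← Units.val_mul,
            ← zpow_natCast u n, ← zpow_add]
          simp
        have hg0 : ‖(↑(u ^ (-(n : ℤ))) : A) * f‖ = 0 := by
          rw [hnorm_zpow, ← hf, mul_zero]
        have hgδ : φ ((↑(u ^ (-(n : ℤ))) : A) * f) < 1 := hδ _ (by rw [hg0]; exact hδ_pos)
        have := hφ_pow n ((↑(u ^ (-(n : ℤ))) : A) * f)
        rw [hback] at this
        rw [this]
        calc b ^ n * φ ((↑(u ^ (-(n : ℤ))) : A) * f) ≤ b ^ n * 1 :=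
              mul_le_mul_of_nonneg_left hgδ.le (pow_nonneg hb_pos.le n)
          _ = b ^ n := mul_one _
      have htend : Tendsto (fun n : ℕ => b ^ n) atTop (nhds 0) :=
        tendsto_pow_atTop_nhds_zero_of_lt_one hb_pos.le hb1
      have := ge_of_tendsto' htend hb_le
      linarith [hφ.nonneg f]
    rw [hφf, Real.zero_rpow (ne_of_gt hs), ← hf, mul_zero]
end

section
/- Let K be a nonarchimedean field and let A be a Banach algebra over K whose underlying ring is an integral domain. Suppose that for every non-zero x ∈ A there exists a constant c_x > 0 with ‖f‖ ≤ c_x·‖fx‖ for all f ∈ A (i.e. Core(A) = A). Then: (i) the spectral seminorm |·|_spc of A is a norm; and (ii) for every non-zero x ∈ A there exists a constant c > 0 such that |f|_spc ≤ c·|fx|_spc for all f ∈ A. -/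
open Filter Topology

/-- The spectral seminorm `|x|_spc = inf_{n ≥ 1} ‖x^n‖^{1/n}` of a seminormed ring. -/
noncomputable def spcSeminorm {A : Type*} [SeminormedRing A] (x : A) : ℝ :=
  ⨅ n : ℕ, ‖x ^ (n + 1)‖ ^ (((n : ℝ) + 1)⁻¹)

lemma spc_aux_iter {A : Type*} [NormedCommRing A] (x : A) (c : ℝ) (hc : 0 ≤ c)
    (h : ∀ f : A, ‖f‖ ≤ c * ‖f * x‖) :
    ∀ k : ℕ, ∀ g : A, ‖g‖ ≤ c ^ k * ‖g * x ^ k‖ := by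
  intro k
  induction k with
  | zero => intro g; simp
  | succ k ih =>
    intro g
    calc ‖g‖ ≤ c * ‖g * x‖ := h g
    _ ≤ c * (c ^ k * ‖(g * x) * x ^ k‖) := by
        exact mul_le_mul_of_nonneg_left (ih (g * x)) hc
    _ = c ^ (k + 1) * ‖g * x ^ (k + 1)‖ := by
        rw [mul_assoc g x (x ^ k), ← pow_succ']; ring

lemma spc_bddBelow {A : Type*} [SeminormedRing A] (x : A) :
    BddBelow (Set.range fun n : ℕ => ‖x ^ (n + 1)‖ ^ (((n : ℝ) + 1)⁻¹)) := by
  refine ⟨0, fun y hy => ?_⟩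
  obtain ⟨n, rfl⟩ := hy
  exact Real.rpow_nonneg (norm_nonneg _) _

/-- For a Banach algebra `A` over a nonarchimedean field which is an integral domain with
`Core(A) = A`: (i) the spectral seminorm is a norm, and (ii) `Core` of `A` for the spectral
seminorm is all of `A`. -/
theorem core_and_spectral_seminorm {K A : Type*}
    [NontriviallyNormedField K] [CompleteSpace K]
    (hK : IsNonarchimedean (fun x : K => ‖x‖))
    [NormedCommRing A] [NormOneClass A] [NormedAlgebra K A] [CompleteSpace A]
    (hA : IsNonarchimedean (fun a : A => ‖a‖)) [IsDomain A]
    (hcore : ∀ x : A, x ≠ 0 → ∃ c > 0, ∀ f : A, ‖f‖ ≤ c * ‖f * x‖) :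
    (∀ x : A, spcSeminorm x = 0 → x = 0) ∧
    (∀ x : A, x ≠ 0 → ∃ c > 0, ∀ f : A, spcSeminorm f ≤ c * spcSeminorm (f * x)) := by
  constructor
  · intro x hx
    by_contra hx0
    obtain ⟨c, hc, h⟩ := hcore x hx0
    set c' : ℝ := max c 1 with hc'def
    have hc1 : 1 ≤ c' := le_max_right _ _
    have hc0 : 0 ≤ c' := le_trans zero_le_one hc1
    have h' : ∀ f : A, ‖f‖ ≤ c' * ‖f * x‖ := fun f =>
      le_trans (h f) (mul_le_mul_of_nonneg_right (le_max_left _ _) (norm_nonneg _))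
    have key : ∀ n : ℕ, c'⁻¹ ≤ ‖x ^ (n + 1)‖ ^ (((n : ℝ) + 1)⁻¹) := by
      intro n
      have h1 : (1 : ℝ) ≤ c' ^ (n + 1) * ‖x ^ (n + 1)‖ := by
        have := spc_aux_iter x c' hc0 h' (n + 1) 1
        simpa using this
      have h2 : (c'⁻¹ : ℝ) ^ (n + 1) ≤ ‖x ^ (n + 1)‖ := by
        have hp : (0:ℝ) < c' ^ (n + 1) := by positivity
        rw [inv_pow, inv_eq_one_div, div_le_iff₀ hp, mul_comm]
        exact h1
      calc c'⁻¹ = ((c'⁻¹ : ℝ) ^ (n + 1)) ^ (((n : ℝ) + 1)⁻¹) := by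
            rw [show ((n : ℝ) + 1) = ((n + 1 : ℕ) : ℝ) by push_cast; ring]
            rw [Real.pow_rpow_inv_natCast (by positivity) (Nat.succ_ne_zero n)]
        _ ≤ ‖x ^ (n + 1)‖ ^ (((n : ℝ) + 1)⁻¹) :=
            Real.rpow_le_rpow (by positivity) h2 (by positivity)
    have : c'⁻¹ ≤ spcSeminorm x := le_ciInf key
    rw [hx] at this
    have : (0:ℝ) < c'⁻¹ := by positivity
    linarith
  · intro x hx0
    obtain ⟨c, hc, h⟩ := hcore x hx0
    set c' : ℝ := max c 1 with hc'def
    have hc1 : 1 ≤ c' := le_max_right _ _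
    have hc0 : 0 < c' := lt_of_lt_of_le zero_lt_one hc1
    have h' : ∀ f : A, ‖f‖ ≤ c' * ‖f * x‖ := fun f =>
      le_trans (h f) (mul_le_mul_of_nonneg_right (le_max_left _ _) (norm_nonneg _))
    refine ⟨c', hc0, fun f => ?_⟩
    have key : ∀ n : ℕ, spcSeminorm f ≤ c' * ‖(f * x) ^ (n + 1)‖ ^ (((n : ℝ) + 1)⁻¹) := by
      intro n
      have h1 : ‖f ^ (n + 1)‖ ≤ c' ^ (n + 1) * ‖(f * x) ^ (n + 1)‖ := by
        have := spc_aux_iter x c' hc0.le h' (n + 1) (f ^ (n + 1))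
        rwa [← mul_pow] at this
      have h2 : ‖f ^ (n + 1)‖ ^ (((n : ℝ) + 1)⁻¹)
          ≤ c' * ‖(f * x) ^ (n + 1)‖ ^ (((n : ℝ) + 1)⁻¹) := by
        have := Real.rpow_le_rpow (norm_nonneg _) h1 (by positivity :
          (0:ℝ) ≤ ((n : ℝ) + 1)⁻¹)
        rw [Real.mul_rpow (by positivity) (norm_nonneg _)] at this
        rw [show ((n : ℝ) + 1) = ((n + 1 : ℕ) : ℝ) by push_cast; ring] at this
        rw [Real.pow_rpow_inv_natCast hc0.le (Nat.succ_ne_zero n)] at this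
        push_cast at this ⊢
        exact this
      exact le_trans (ciInf_le (spc_bddBelow f) n) h2
    have key2 : ∀ n : ℕ, spcSeminorm f / c' ≤ ‖(f * x) ^ (n + 1)‖ ^ (((n : ℝ) + 1)⁻¹) :=
      fun n => (div_le_iff₀' hc0).mpr (key n)
    have : spcSeminorm f / c' ≤ spcSeminorm (f * x) := le_ciInf key2
    calc spcSeminorm f = c' * (spcSeminorm f / c') := by field_simp
      _ ≤ c' * spcSeminorm (f * x) := mul_le_mul_of_nonneg_left this hc0.le
end

section
/- Let K be a nonarchimedean field, A a Banach algebra over K, and p ⊊ A a closed prime ideal such that the quotient Banach algebra B = A/p (with quotient norm) satisfies: for every non-zero x ∈ B there exists c > 0 with ‖f‖ ≤ c·‖fx‖ for all f ∈ B (i.e. Core(B) = B). Then there exists a bounded multiplicative seminorm φ on A with ker(φ) = p. -/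
open Filter Topology

/-- A bounded multiplicative (nonarchimedean) seminorm on a seminormed commutative ring. -/
structure IsBddMulSeminorm {A : Type*} [SeminormedCommRing A] (φ : A → ℝ) : Prop where
  nonneg : ∀ f, 0 ≤ φ f
  map_zero : φ 0 = 0
  map_one : φ 1 = 1
  map_neg : ∀ f, φ (-f) = φ f
  nonarch : ∀ f g, φ (f + g) ≤ max (φ f) (φ g)
  mul_eq : ∀ f g, φ (f * g) = φ f * φ g
  bounded : ∃ C > 0, ∀ f, φ f ≤ C * ‖f‖

section Aux
variable {B : Type*} [CommRing B]

/-- Auxiliary class of seminorms used in the Zorn argument. -/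
structure GoodSN (q m : B → ℝ) (ψ : B → ℝ) : Prop where
  nonneg : ∀ f, 0 ≤ ψ f
  map_zero : ψ 0 = 0
  map_neg : ∀ f, ψ (-f) = ψ f
  nonarch : ∀ f g, ψ (f + g) ≤ max (ψ f) (ψ g)
  submul : ∀ f g, ψ (f * g) ≤ ψ f * ψ g
  map_one : ψ 1 = 1
  le_q : ∀ f, ψ f ≤ q f
  lower : ∀ f g, f ≠ 0 → m f * ψ g ≤ ψ (f * g)

namespace GoodSN

variable {q m ψ : B → ℝ}

theorem pow_le (h : GoodSN q m ψ) (x : B) : ∀ n : ℕ, ψ (x ^ n) ≤ ψ x ^ n := by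
  intro n
  induction n with
  | zero => simp [h.map_one]
  | succ n ih =>
      rw [pow_succ, pow_succ]
      calc ψ (x ^ n * x) ≤ ψ (x ^ n) * ψ x := h.submul _ _
        _ ≤ ψ x ^ n * ψ x := mul_le_mul_of_nonneg_right ih (h.nonneg x)

theorem le_pow (h : GoodSN q m ψ) (hm : ∀ f, f ≠ 0 → 0 < m f) {x : B} (hx : x ≠ 0) :
    ∀ n : ℕ, m x ^ n ≤ ψ (x ^ n) := by
  intro n
  induction n with
  | zero => simp [h.map_one]
  | succ n ih =>
      rw [pow_succ (m x), pow_succ x, mul_comm (x ^ n) x]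
      calc m x ^ n * m x = m x * m x ^ n := by ring
        _ ≤ m x * ψ (x ^ n) := mul_le_mul_of_nonneg_left ih (hm x hx).le
        _ ≤ ψ (x * x ^ n) := h.lower _ _ hx

theorem m_le (h : GoodSN q m ψ) {x : B} (hx : x ≠ 0) : m x ≤ ψ x := by
  have := h.lower x 1 hx
  rwa [mul_one, h.map_one, mul_one] at this

theorem pos (h : GoodSN q m ψ) (hm : ∀ f, f ≠ 0 → 0 < m f) {x : B} (hx : x ≠ 0) : 0 < ψ x :=
  lt_of_lt_of_le (hm x hx) (h.m_le hx)

theorem natCast_le (h : GoodSN q m ψ) : ∀ n : ℕ, ψ (n : B) ≤ 1 := by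
  intro n
  induction n with
  | zero => rw [Nat.cast_zero, h.map_zero]; exact zero_le_one
  | succ n ih =>
      push_cast
      calc ψ ((n : B) + 1) ≤ max (ψ (n : B)) (ψ 1) := h.nonarch _ _
        _ ≤ 1 := max_le ih h.map_one.le

theorem sum_le_sup' (h : GoodSN q m ψ) {ι : Type*} (s : Finset ι) (hs : s.Nonempty) (F : ι → B) :
    ψ (∑ i ∈ s, F i) ≤ s.sup' hs fun i => ψ (F i) := by
  induction hs using Finset.Nonempty.cons_induction with
  | singleton a => simp
  | cons a s ha hs ih =>
      rw [Finset.sum_cons, Finset.sup'_cons hs]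
      calc ψ (F a + ∑ i ∈ s, F i) ≤ max (ψ (F a)) (ψ (∑ i ∈ s, F i)) := h.nonarch _ _
        _ ≤ max (ψ (F a)) (s.sup' hs fun i => ψ (F i)) := max_le_max le_rfl ih

/-- Binomial bound: some `k ≤ n` controls `ψ ((x+y)^n)`. -/
theorem add_pow_le (h : GoodSN q m ψ) (x y : B) (n : ℕ) :
    ∃ k ≤ n, ψ ((x + y) ^ n) ≤ ψ (x ^ k) * ψ (y ^ (n - k)) := by
  rw [add_pow]
  have hne : (Finset.range (n + 1)).Nonempty := ⟨0, by simp⟩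
  have h1 := h.sum_le_sup' (Finset.range (n + 1)) hne
    (fun k => x ^ k * y ^ (n - k) * ((n.choose k : ℕ) : B))
  obtain ⟨k, hk, hqe⟩ := Finset.exists_mem_eq_sup' hne
    (fun k => ψ (x ^ k * y ^ (n - k) * ((n.choose k : ℕ) : B)))
  refine ⟨k, by simpa [Nat.lt_succ_iff] using hk, ?_⟩
  calc ψ (∑ i ∈ Finset.range (n + 1), x ^ i * y ^ (n - i) * ((n.choose i : ℕ) : B))
      ≤ ψ (x ^ k * y ^ (n - k) * ((n.choose k : ℕ) : B)) := by rw [← hqe]; exact h1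
    _ ≤ ψ (x ^ k * y ^ (n - k)) * ψ (((n.choose k : ℕ) : B)) := h.submul _ _
    _ ≤ ψ (x ^ k * y ^ (n - k)) * 1 :=
        mul_le_mul_of_nonneg_left (h.natCast_le _) (h.nonneg _)
    _ = ψ (x ^ k * y ^ (n - k)) := mul_one _
    _ ≤ ψ (x ^ k) * ψ (y ^ (n - k)) := h.submul _ _

end GoodSN


section Rho
variable {B : Type*} [CommRing B]

variable {B : Type*} [CommRing B]

/-- spectral radius attached to a seminorm -/
noncomputable def rhoSN (ψ : B → ℝ) (x : B) : ℝ :=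
  sInf {r : ℝ | ∃ n : ℕ, 0 < n ∧ r = ψ (x ^ n) ^ ((n : ℝ))⁻¹}

variable {q m ψ : B → ℝ}

theorem rhoSet_nonempty (ψ : B → ℝ) (x : B) :
    {r : ℝ | ∃ n : ℕ, 0 < n ∧ r = ψ (x ^ n) ^ ((n : ℝ))⁻¹}.Nonempty :=
  ⟨ψ (x ^ 1) ^ ((1 : ℝ))⁻¹, 1, one_pos, by norm_num⟩

theorem rhoSet_bddBelow (h : ∀ f, 0 ≤ ψ f) (x : B) :
    BddBelow {r : ℝ | ∃ n : ℕ, 0 < n ∧ r = ψ (x ^ n) ^ ((n : ℝ))⁻¹} := by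
  refine ⟨0, fun r hr => ?_⟩
  obtain ⟨n, _, rfl⟩ := hr
  exact Real.rpow_nonneg (h _) _

theorem rho_nonneg (h : ∀ f, 0 ≤ ψ f) (x : B) : 0 ≤ rhoSN ψ x :=
  Real.sInf_nonneg fun r hr => by obtain ⟨n, _, rfl⟩ := hr; exact Real.rpow_nonneg (h _) _

theorem rho_le_term (h : ∀ f, 0 ≤ ψ f) (x : B) {n : ℕ} (hn : 0 < n) :
    rhoSN ψ x ≤ ψ (x ^ n) ^ ((n : ℝ))⁻¹ :=
  csInf_le (rhoSet_bddBelow h x) ⟨n, hn, rfl⟩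

theorem rho_le_self (h : ∀ f, 0 ≤ ψ f) (x : B) : rhoSN ψ x ≤ ψ x := by
  have := rho_le_term h x one_pos
  simpa using this

theorem rho_exists_pow_lt (h : ∀ f, 0 ≤ ψ f) {x : B} {t : ℝ} (ht : rhoSN ψ x < t) :
    ∃ n : ℕ, 0 < n ∧ ψ (x ^ n) < t ^ n := by
  obtain ⟨r, ⟨n, hn, rfl⟩, hrt⟩ := exists_lt_of_csInf_lt (rhoSet_nonempty ψ x) ht
  refine ⟨n, hn, ?_⟩
  have h1 : (ψ (x ^ n) ^ ((n : ℝ))⁻¹) ^ n < t ^ n :=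
    pow_lt_pow_left₀ hrt (Real.rpow_nonneg (h _) _) hn.ne'
  rwa [Real.rpow_inv_natCast_pow (h _) hn.ne'] at h1

theorem geom_bound (hnn : ∀ f, 0 ≤ ψ f) (hsub : ∀ f g, ψ (f * g) ≤ ψ f * ψ g)
    (hone : ψ 1 = 1) {x : B} {t : ℝ} (ht : 0 < t) {N : ℕ} (hN : 0 < N)
    (hb : ψ (x ^ N) ≤ t ^ N) (j : ℕ) :
    ψ (x ^ j) ≤ ((max 1 (ψ x)) ^ N * (max 1 t⁻¹) ^ N) * t ^ j := by
  set D := (max 1 (ψ x)) ^ N * (max 1 t⁻¹) ^ N with hD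
  have hmax1 : (1:ℝ) ≤ max 1 (ψ x) := le_max_left _ _
  have hmax2 : (1:ℝ) ≤ max 1 t⁻¹ := le_max_left _ _
  have hr : j % N < N := Nat.mod_lt _ hN
  have hdecomp : x ^ j = (x ^ N) ^ (j / N) * x ^ (j % N) := by
    rw [← pow_mul, ← pow_add, Nat.div_add_mod]
  -- pow_le lemma inline
  have hpow_le : ∀ (y : B) (n : ℕ), ψ (y ^ n) ≤ ψ y ^ n := by
    intro y n
    induction n with
    | zero => simp [hone]
    | succ n ih =>
        rw [pow_succ, pow_succ]
        calc ψ (y ^ n * y) ≤ ψ (y ^ n) * ψ y := hsub _ _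
          _ ≤ ψ y ^ n * ψ y := mul_le_mul_of_nonneg_right ih (hnn y)
  have step1 : ψ (x ^ j) ≤ (t ^ N) ^ (j / N) * ψ x ^ (j % N) := by
    rw [hdecomp]
    calc ψ ((x ^ N) ^ (j / N) * x ^ (j % N))
        ≤ ψ ((x ^ N) ^ (j / N)) * ψ (x ^ (j % N)) := hsub _ _
      _ ≤ ψ (x ^ N) ^ (j / N) * ψ x ^ (j % N) := by
          exact mul_le_mul (hpow_le _ _) (hpow_le _ _) (hnn _)
            (pow_nonneg (hnn _) _)
      _ ≤ (t ^ N) ^ (j / N) * ψ x ^ (j % N) := by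
          refine mul_le_mul_of_nonneg_right ?_ (pow_nonneg (hnn _) _)
          exact pow_le_pow_left₀ (hnn _) hb _
  have step2 : ψ x ^ (j % N) ≤ D * t ^ (j % N) := by
    have h1 : ψ x ^ (j % N) ≤ (max 1 (ψ x)) ^ N := by
      calc ψ x ^ (j % N) ≤ (max 1 (ψ x)) ^ (j % N) :=
            pow_le_pow_left₀ (hnn x) (le_max_right _ _) _
        _ ≤ (max 1 (ψ x)) ^ N := pow_le_pow_right₀ hmax1 hr.le
    have h2 : (t⁻¹) ^ (j % N) ≤ (max 1 t⁻¹) ^ N := by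
      calc (t⁻¹) ^ (j % N) ≤ (max 1 t⁻¹) ^ (j % N) :=
            pow_le_pow_left₀ (inv_nonneg.mpr ht.le) (le_max_right _ _) _
        _ ≤ (max 1 t⁻¹) ^ N := pow_le_pow_right₀ hmax2 hr.le
    have h3 : ψ x ^ (j % N) = (ψ x ^ (j % N) * (t⁻¹) ^ (j % N)) * t ^ (j % N) := by
      rw [mul_assoc, ← mul_pow, inv_mul_cancel₀ ht.ne', one_pow, mul_one]
    rw [h3, hD]
    have h4 : ψ x ^ (j % N) * (t⁻¹) ^ (j % N) ≤ (max 1 (ψ x)) ^ N * (max 1 t⁻¹) ^ N :=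
      mul_le_mul h1 h2 (pow_nonneg (inv_nonneg.mpr ht.le) _) (pow_nonneg (by linarith) _)
    exact mul_le_mul_of_nonneg_right h4 (pow_nonneg ht.le _)
  calc ψ (x ^ j) ≤ (t ^ N) ^ (j / N) * ψ x ^ (j % N) := step1
    _ ≤ (t ^ N) ^ (j / N) * (D * t ^ (j % N)) := by
        exact mul_le_mul_of_nonneg_left step2 (pow_nonneg (pow_nonneg ht.le _) _)
    _ = D * ((t ^ N) ^ (j / N) * t ^ (j % N)) := by ring
    _ = D * t ^ j := by rw [← pow_mul, ← pow_add, Nat.div_add_mod]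

end Rho
section Rho2
variable {B : Type*} [CommRing B] {q m ψ : B → ℝ}

theorem rho_zero (h : GoodSN q m ψ) : rhoSN ψ (0 : B) = 0 :=
  le_antisymm ((rho_le_self h.nonneg 0).trans_eq h.map_zero) (rho_nonneg h.nonneg 0)

theorem psi_neg_pow (h : GoodSN q m ψ) (x : B) (n : ℕ) : ψ ((-x) ^ n) = ψ (x ^ n) := by
  rcases Nat.even_or_odd n with he | ho
  · rw [he.neg_pow]
  · rw [ho.neg_pow, h.map_neg]

theorem rho_neg (h : GoodSN q m ψ) (x : B) : rhoSN ψ (-x) = rhoSN ψ x := by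
  unfold rhoSN
  congr 1
  ext r
  constructor
  · rintro ⟨n, hn, rfl⟩; exact ⟨n, hn, by rw [psi_neg_pow h]⟩
  · rintro ⟨n, hn, rfl⟩; exact ⟨n, hn, by rw [psi_neg_pow h]⟩

theorem rho_one (h : GoodSN q m ψ) : rhoSN ψ (1 : B) = 1 := by
  refine le_antisymm ((rho_le_self h.nonneg 1).trans_eq h.map_one) ?_
  refine le_csInf (rhoSet_nonempty ψ 1) ?_
  rintro r ⟨n, hn, rfl⟩
  rw [one_pow, h.map_one, Real.one_rpow]

theorem rho_submul (h : GoodSN q m ψ) (x y : B) :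
    rhoSN ψ (x * y) ≤ rhoSN ψ x * rhoSN ψ y := by
  have hrx := rho_nonneg h.nonneg x
  have hry := rho_nonneg h.nonneg y
  have key : ∀ δ : ℝ, 0 < δ →
      rhoSN ψ (x * y) ≤ (rhoSN ψ x + δ) * (rhoSN ψ y + δ) := by
    intro δ hδ
    obtain ⟨n₁, hn₁, hx⟩ := rho_exists_pow_lt h.nonneg
      (show rhoSN ψ x < rhoSN ψ x + δ by linarith)
    obtain ⟨n₂, hn₂, hy⟩ := rho_exists_pow_lt h.nonneg
      (show rhoSN ψ y < rhoSN ψ y + δ by linarith)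
    set M := n₁ * n₂ with hM
    have hMpos : 0 < M := Nat.mul_pos hn₁ hn₂
    have hxM : ψ (x ^ M) ≤ (rhoSN ψ x + δ) ^ M := by
      have : ψ ((x ^ n₁) ^ n₂) ≤ ψ (x ^ n₁) ^ n₂ := h.pow_le _ _
      rw [← pow_mul] at this
      calc ψ (x ^ M) ≤ ψ (x ^ n₁) ^ n₂ := this
        _ ≤ ((rhoSN ψ x + δ) ^ n₁) ^ n₂ :=
            pow_le_pow_left₀ (h.nonneg _) hx.le _
        _ = (rhoSN ψ x + δ) ^ M := by rw [← pow_mul]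
    have hyM : ψ (y ^ M) ≤ (rhoSN ψ y + δ) ^ M := by
      have : ψ ((y ^ n₂) ^ n₁) ≤ ψ (y ^ n₂) ^ n₁ := h.pow_le _ _
      rw [← pow_mul] at this
      calc ψ (y ^ M) = ψ (y ^ (n₂ * n₁)) := by rw [Nat.mul_comm]
        _ ≤ ψ (y ^ n₂) ^ n₁ := this
        _ ≤ ((rhoSN ψ y + δ) ^ n₂) ^ n₁ :=
            pow_le_pow_left₀ (h.nonneg _) hy.le _
        _ = (rhoSN ψ y + δ) ^ M := by rw [← pow_mul, Nat.mul_comm]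
    have hbound : ψ ((x * y) ^ M) ≤ ((rhoSN ψ x + δ) ^ M) * ((rhoSN ψ y + δ) ^ M) := by
      rw [mul_pow]
      calc ψ (x ^ M * y ^ M) ≤ ψ (x ^ M) * ψ (y ^ M) := h.submul _ _
        _ ≤ _ := mul_le_mul hxM hyM (h.nonneg _) (pow_nonneg (by linarith) _)
    calc rhoSN ψ (x * y) ≤ ψ ((x * y) ^ M) ^ ((M : ℝ))⁻¹ :=
          rho_le_term h.nonneg _ hMpos
      _ ≤ (((rhoSN ψ x + δ) ^ M) * ((rhoSN ψ y + δ) ^ M)) ^ ((M : ℝ))⁻¹ :=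
          Real.rpow_le_rpow (h.nonneg _) hbound (by positivity)
      _ = (rhoSN ψ x + δ) * (rhoSN ψ y + δ) := by
          rw [Real.mul_rpow (pow_nonneg (by linarith) _) (pow_nonneg (by linarith) _),
            Real.pow_rpow_inv_natCast (by linarith) hMpos.ne',
            Real.pow_rpow_inv_natCast (by linarith) hMpos.ne']
  refine le_of_forall_pos_le_add fun ε hε => ?_
  have hC : 0 < rhoSN ψ x + rhoSN ψ y + 1 := by linarith
  set δ := min 1 (ε / (rhoSN ψ x + rhoSN ψ y + 1)) with hδdef
  have hδpos : 0 < δ := lt_min one_pos (div_pos hε hC)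
  have hδ1 : δ ≤ 1 := min_le_left _ _
  have hδ2 : δ ≤ ε / (rhoSN ψ x + rhoSN ψ y + 1) := min_le_right _ _
  calc rhoSN ψ (x * y) ≤ (rhoSN ψ x + δ) * (rhoSN ψ y + δ) := key δ hδpos
    _ = rhoSN ψ x * rhoSN ψ y + δ * (rhoSN ψ x + rhoSN ψ y + δ) := by ring
    _ ≤ rhoSN ψ x * rhoSN ψ y + δ * (rhoSN ψ x + rhoSN ψ y + 1) := by nlinarith
    _ ≤ rhoSN ψ x * rhoSN ψ y + ε := by
        have := (le_div_iff₀ hC).mp hδ2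
        nlinarith

theorem m_pow_le {m : B → ℝ} [IsDomain B]
    (hm_pos : ∀ f, f ≠ 0 → 0 < m f)
    (hm_supmul : ∀ f g, f ≠ 0 → g ≠ 0 → m f * m g ≤ m (f * g))
    (hm_one : 1 ≤ m 1) {f : B} (hf : f ≠ 0) : ∀ n : ℕ, m f ^ n ≤ m (f ^ n) := by
  intro n
  induction n with
  | zero => simpa using hm_one
  | succ n ih =>
      have hfn : f ^ n ≠ 0 := pow_ne_zero _ hf
      calc m f ^ (n + 1) = m f * m f ^ n := by ring
        _ ≤ m f * m (f ^ n) := mul_le_mul_of_nonneg_left ih (hm_pos f hf).le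
        _ ≤ m (f * f ^ n) := hm_supmul f (f ^ n) hf hfn
        _ = m (f ^ (n + 1)) := by rw [← pow_succ']

theorem rho_lower [IsDomain B] (h : GoodSN q m ψ)
    (hm_pos : ∀ f, f ≠ 0 → 0 < m f)
    (hm_supmul : ∀ f g, f ≠ 0 → g ≠ 0 → m f * m g ≤ m (f * g))
    (hm_one : 1 ≤ m 1) {f : B} (hf : f ≠ 0) (g : B) :
    m f * rhoSN ψ g ≤ rhoSN ψ (f * g) := by
  refine le_csInf (rhoSet_nonempty ψ (f * g)) ?_
  rintro r ⟨n, hn, rfl⟩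
  have hfn : f ^ n ≠ 0 := pow_ne_zero _ hf
  have hmf := hm_pos f hf
  have h1 : m f ^ n * ψ (g ^ n) ≤ ψ ((f * g) ^ n) := by
    rw [mul_pow]
    calc m f ^ n * ψ (g ^ n) ≤ m (f ^ n) * ψ (g ^ n) :=
          mul_le_mul_of_nonneg_right (m_pow_le hm_pos hm_supmul hm_one hf n) (h.nonneg _)
      _ ≤ ψ (f ^ n * g ^ n) := h.lower _ _ hfn
  calc m f * rhoSN ψ g ≤ m f * ψ (g ^ n) ^ ((n : ℝ))⁻¹ :=
        mul_le_mul_of_nonneg_left (rho_le_term h.nonneg g hn) hmf.le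
    _ = (m f ^ n * ψ (g ^ n)) ^ ((n : ℝ))⁻¹ := by
        rw [Real.mul_rpow (pow_nonneg hmf.le _) (h.nonneg _),
          Real.pow_rpow_inv_natCast hmf.le hn.ne']
    _ ≤ ψ ((f * g) ^ n) ^ ((n : ℝ))⁻¹ :=
        Real.rpow_le_rpow (mul_nonneg (pow_nonneg hmf.le _) (h.nonneg _)) h1 (by positivity)

theorem rho_nonarch (h : GoodSN q m ψ) (x y : B) :
    rhoSN ψ (x + y) ≤ max (rhoSN ψ x) (rhoSN ψ y) := by
  set a := max (rhoSN ψ x) (rhoSN ψ y) with ha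
  have ha0 : 0 ≤ a := le_trans (rho_nonneg h.nonneg x) (le_max_left _ _)
  refine le_of_forall_pos_le_add fun ε hε => ?_
  set t := a + ε with htdef
  have ht : 0 < t := by positivity
  obtain ⟨N₁, hN₁, hx⟩ := rho_exists_pow_lt h.nonneg
    (show rhoSN ψ x < t by
      have : rhoSN ψ x ≤ a := le_max_left _ _
      linarith)
  obtain ⟨N₂, hN₂, hy⟩ := rho_exists_pow_lt h.nonneg
    (show rhoSN ψ y < t by
      have : rhoSN ψ y ≤ a := le_max_right _ _
      linarith)
  set Dx := (max 1 (ψ x)) ^ N₁ * (max 1 t⁻¹) ^ N₁ with hDx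
  set Dy := (max 1 (ψ y)) ^ N₂ * (max 1 t⁻¹) ^ N₂ with hDy
  have hgx : ∀ j, ψ (x ^ j) ≤ Dx * t ^ j :=
    geom_bound h.nonneg h.submul h.map_one ht hN₁ hx.le
  have hgy : ∀ j, ψ (y ^ j) ≤ Dy * t ^ j :=
    geom_bound h.nonneg h.submul h.map_one ht hN₂ hy.le
  have hDx1 : (1:ℝ) ≤ Dx := by
    have h1 : (1:ℝ) ≤ (max 1 (ψ x)) ^ N₁ := one_le_pow₀ (le_max_left _ _)
    have h2 : (1:ℝ) ≤ (max 1 t⁻¹) ^ N₁ := one_le_pow₀ (le_max_left _ _)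
    nlinarith
  have hDy1 : (1:ℝ) ≤ Dy := by
    have h1 : (1:ℝ) ≤ (max 1 (ψ y)) ^ N₂ := one_le_pow₀ (le_max_left _ _)
    have h2 : (1:ℝ) ≤ (max 1 t⁻¹) ^ N₂ := one_le_pow₀ (le_max_left _ _)
    nlinarith
  have hD1 : (1:ℝ) ≤ Dx * Dy := one_le_mul_of_one_le_of_one_le hDx1 hDy1
  have hDpos : (0:ℝ) < Dx * Dy := lt_of_lt_of_le one_pos hD1
  have key : ∀ n : ℕ, ψ ((x + y) ^ n) ≤ (Dx * Dy) * t ^ n := by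
    intro n
    obtain ⟨k, hk, hb⟩ := h.add_pow_le x y n
    calc ψ ((x + y) ^ n) ≤ ψ (x ^ k) * ψ (y ^ (n - k)) := hb
      _ ≤ (Dx * t ^ k) * (Dy * t ^ (n - k)) :=
          mul_le_mul (hgx k) (hgy (n - k)) (h.nonneg _)
            (by positivity)
      _ = (Dx * Dy) * (t ^ k * t ^ (n - k)) := by ring
      _ = (Dx * Dy) * t ^ n := by rw [← pow_add, Nat.add_sub_cancel' hk]
  have main : ∀ n : ℕ, 0 < n → rhoSN ψ (x + y) ≤ (Dx * Dy) ^ ((n : ℝ))⁻¹ * t := by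
    intro n hn
    calc rhoSN ψ (x + y) ≤ ψ ((x + y) ^ n) ^ ((n : ℝ))⁻¹ :=
          rho_le_term h.nonneg _ hn
      _ ≤ ((Dx * Dy) * t ^ n) ^ ((n : ℝ))⁻¹ :=
          Real.rpow_le_rpow (h.nonneg _) (key n) (by positivity)
      _ = (Dx * Dy) ^ ((n : ℝ))⁻¹ * t := by
          rw [Real.mul_rpow hDpos.le (by positivity),
            Real.pow_rpow_inv_natCast ht.le hn.ne']
  have hT : Tendsto (fun n : ℕ => (Dx * Dy) ^ ((n : ℝ))⁻¹ * t) atTop (𝓝 t) := by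
    have h1 : Tendsto (fun n : ℕ => (Dx * Dy) ^ ((n : ℝ))⁻¹) atTop (𝓝 1) := by
      have h2 : Tendsto (fun n : ℕ => Real.log (Dx * Dy) * ((n : ℝ))⁻¹) atTop (𝓝 0) := by
        simpa using (tendsto_inv_atTop_nhds_zero_nat.const_mul (Real.log (Dx * Dy)))
      have h3 := (Real.continuous_exp.tendsto 0).comp h2
      simp only [Function.comp_def, Real.exp_zero] at h3
      refine h3.congr fun n => ?_
      rw [Real.rpow_def_of_pos hDpos]
    simpa using h1.mul_const t
  have hrho_le_t : rhoSN ψ (x + y) ≤ t := by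
    refine ge_of_tendsto hT ?_
    filter_upwards [eventually_ge_atTop 1] with n hn
    exact main n hn
  exact hrho_le_t

theorem rho_good [IsDomain B] (h : GoodSN q m ψ)
    (hm_pos : ∀ f, f ≠ 0 → 0 < m f)
    (hm_supmul : ∀ f g, f ≠ 0 → g ≠ 0 → m f * m g ≤ m (f * g))
    (hm_one : 1 ≤ m 1) : GoodSN q m (rhoSN ψ) where
  nonneg := rho_nonneg h.nonneg
  map_zero := rho_zero h
  map_neg := rho_neg h
  nonarch := rho_nonarch h
  submul := rho_submul h
  map_one := rho_one h
  le_q f := (rho_le_self h.nonneg f).trans (h.le_q f)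
  lower f g hf := rho_lower h hm_pos hm_supmul hm_one hf g

end Rho2

section ZornPart
variable {B : Type*} [CommRing B] {q m : B → ℝ}

private theorem le_mul_of_forall_eps {a b c : ℝ} (hb : 0 ≤ b) (hc : 0 ≤ c)
    (h : ∀ ε : ℝ, 0 < ε → a ≤ (b + ε) * (c + ε)) : a ≤ b * c := by
  refine le_of_forall_pos_le_add fun ε hε => ?_
  have hC : 0 < b + c + 1 := by linarith
  set δ := min 1 (ε / (b + c + 1)) with hδdef
  have hδpos : 0 < δ := lt_min one_pos (div_pos hε hC)
  have hδ1 : δ ≤ 1 := min_le_left _ _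
  have hδ2 : δ ≤ ε / (b + c + 1) := min_le_right _ _
  have h2 := (le_div_iff₀ hC).mp hδ2
  calc a ≤ (b + δ) * (c + δ) := h δ hδpos
    _ = b * c + δ * (b + c + δ) := by ring
    _ ≤ b * c + δ * (b + c + 1) := by nlinarith
    _ ≤ b * c + ε := by nlinarith

theorem exists_minimal_goodSN (hq : GoodSN q m q) (hm_pos : ∀ f, f ≠ 0 → 0 < m f) :
    ∃ φ : B → ℝ, GoodSN q m φ ∧ ∀ ψ : B → ℝ, GoodSN q m ψ → ψ ≤ φ → ψ = φ := by
  set S : Set ((B → ℝ)ᵒᵈ) := {ψ | GoodSN q m (OrderDual.ofDual ψ)} with hS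
  have hzorn := zorn_le₀ S ?_
  · obtain ⟨φd, hφd⟩ := hzorn
    refine ⟨OrderDual.ofDual φd, hφd.1, fun ψ hψ hle => ?_⟩
    have h2 : φd ≤ OrderDual.toDual ψ := hle
    have h3 := hφd.2 (y := OrderDual.toDual ψ) hψ h2
    exact le_antisymm hle h3
  · intro c hcS hchain
    rcases c.eq_empty_or_nonempty with rfl | ⟨ψ₀, hψ₀⟩
    · exact ⟨OrderDual.toDual q, hq, fun z hz => absurd hz (Set.notMem_empty z)⟩
    -- the pointwise infimum of the chain
    set χ : B → ℝ := fun f => sInf ((fun ψ : (B → ℝ)ᵒᵈ => OrderDual.ofDual ψ f) '' c) with hχ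
    have hne : ∀ f : B, ((fun ψ : (B → ℝ)ᵒᵈ => OrderDual.ofDual ψ f) '' c).Nonempty :=
      fun f => ⟨_, ⟨ψ₀, hψ₀, rfl⟩⟩
    have hbdd : ∀ f : B, BddBelow ((fun ψ : (B → ℝ)ᵒᵈ => OrderDual.ofDual ψ f) '' c) := by
      refine fun f => ⟨0, ?_⟩
      rintro r ⟨ψ, hψ, rfl⟩
      exact (hcS hψ).nonneg f
    have hχ_le : ∀ ψ ∈ c, ∀ f, χ f ≤ OrderDual.ofDual ψ f :=
      fun ψ hψ f => csInf_le (hbdd f) ⟨ψ, hψ, rfl⟩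
    have hχ_nonneg : ∀ f, 0 ≤ χ f := by
      intro f
      refine le_csInf (hne f) ?_
      rintro r ⟨ψ, hψ, rfl⟩
      exact (hcS hψ).nonneg f
    have happrox : ∀ (f : B) (ε : ℝ), 0 < ε → ∃ ψ ∈ c, OrderDual.ofDual ψ f < χ f + ε := by
      intro f ε hε
      obtain ⟨r, ⟨ψ, hψ, rfl⟩, hr⟩ := exists_lt_of_csInf_lt (hne f)
        (show χ f < χ f + ε by linarith)
      exact ⟨ψ, hψ, hr⟩
    -- pick a common element of the chain dominating two approximations
    have hcommon : ∀ (f g : B) (ε : ℝ), 0 < ε → ∃ ψ ∈ c,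
        OrderDual.ofDual ψ f < χ f + ε ∧ OrderDual.ofDual ψ g < χ g + ε := by
      intro f g ε hε
      obtain ⟨ψ₁, hψ₁, h1⟩ := happrox f ε hε
      obtain ⟨ψ₂, hψ₂, h2⟩ := happrox g ε hε
      rcases eq_or_ne ψ₁ ψ₂ with rfl | hne12
      · exact ⟨ψ₁, hψ₁, h1, h2⟩
      rcases hchain hψ₁ hψ₂ hne12 with hle | hle
      · -- ψ₁ ≤ ψ₂ in dual means ψ₂ ≤ ψ₁ pointwise
        exact ⟨ψ₂, hψ₂, lt_of_le_of_lt (hle f) h1, h2⟩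
      · exact ⟨ψ₁, hψ₁, h1, lt_of_le_of_lt (hle g) h2⟩
    have hχq : GoodSN q m χ := by
      constructor
      · exact hχ_nonneg
      · refine le_antisymm ?_ (hχ_nonneg 0)
        calc χ 0 ≤ OrderDual.ofDual ψ₀ 0 := hχ_le ψ₀ hψ₀ 0
          _ = 0 := (hcS hψ₀).map_zero
      · intro f
        refine congrArg sInf (Set.image_congr ?_)
        exact fun ψ hψ => (hcS hψ).map_neg f
      · intro f g
        refine le_of_forall_pos_le_add fun ε hε => ?_
        obtain ⟨ψ, hψ, h1, h2⟩ := hcommon f g ε hε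
        calc χ (f + g) ≤ OrderDual.ofDual ψ (f + g) := hχ_le ψ hψ _
          _ ≤ max (OrderDual.ofDual ψ f) (OrderDual.ofDual ψ g) := (hcS hψ).nonarch f g
          _ ≤ max (χ f + ε) (χ g + ε) := max_le_max h1.le h2.le
          _ = max (χ f) (χ g) + ε := by rw [max_add_add_right]
      · intro f g
        refine le_mul_of_forall_eps (hχ_nonneg f) (hχ_nonneg g) fun ε hε => ?_
        obtain ⟨ψ, hψ, h1, h2⟩ := hcommon f g ε hε
        calc χ (f * g) ≤ OrderDual.ofDual ψ (f * g) := hχ_le ψ hψ _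
          _ ≤ OrderDual.ofDual ψ f * OrderDual.ofDual ψ g := (hcS hψ).submul f g
          _ ≤ (χ f + ε) * (χ g + ε) := by
              have hnn := (hcS hψ).nonneg f
              have hnn2 := (hcS hψ).nonneg g
              nlinarith
      · refine le_antisymm ?_ ?_
        · calc χ 1 ≤ OrderDual.ofDual ψ₀ 1 := hχ_le ψ₀ hψ₀ 1
            _ = 1 := (hcS hψ₀).map_one
        · refine le_csInf (hne 1) ?_
          rintro r ⟨ψ, hψ, rfl⟩
          exact ((hcS hψ).map_one).ge
      · intro f
        calc χ f ≤ OrderDual.ofDual ψ₀ f := hχ_le ψ₀ hψ₀ f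
          _ ≤ q f := (hcS hψ₀).le_q f
      · intro f g hf
        refine le_csInf (hne (f * g)) ?_
        rintro r ⟨ψ, hψ, rfl⟩
        calc m f * χ g ≤ m f * OrderDual.ofDual ψ g :=
              mul_le_mul_of_nonneg_left (hχ_le ψ hψ g) (hm_pos f hf).le
          _ ≤ OrderDual.ofDual ψ (f * g) := GoodSN.lower (hcS hψ) f g hf
    refine ⟨OrderDual.toDual χ, hχq, fun ψ hψ => ?_⟩
    exact fun f => hχ_le ψ hψ f

end ZornPart


section PhixPart
variable {B : Type*} [CommRing B] {q m : B → ℝ}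

/-- Power-multiplicativity of a minimal element. -/
theorem minimal_pow_eq [IsDomain B] {φ : B → ℝ} (hφ : GoodSN q m φ)
    (hmin : ∀ ψ : B → ℝ, GoodSN q m ψ → ψ ≤ φ → ψ = φ)
    (hm_pos : ∀ f, f ≠ 0 → 0 < m f)
    (hm_supmul : ∀ f g, f ≠ 0 → g ≠ 0 → m f * m g ≤ m (f * g))
    (hm_one : 1 ≤ m 1) (x : B) (k : ℕ) : φ (x ^ k) = φ x ^ k := by
  have hrho : rhoSN φ = φ :=
    hmin (rhoSN φ) (rho_good hφ hm_pos hm_supmul hm_one)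
      (fun f => rho_le_self hφ.nonneg f)
  rcases Nat.eq_zero_or_pos k with rfl | hk
  · simp [hφ.map_one]
  refine le_antisymm (hφ.pow_le x k) ?_
  have h1 : φ x ≤ φ (x ^ k) ^ ((k : ℝ))⁻¹ := by
    conv_lhs => rw [← hrho]
    exact rho_le_term hφ.nonneg x hk
  calc φ x ^ k ≤ (φ (x ^ k) ^ ((k : ℝ))⁻¹) ^ k :=
        pow_le_pow_left₀ (hφ.nonneg x) h1 k
    _ = φ (x ^ k) := Real.rpow_inv_natCast_pow (hφ.nonneg _) hk.ne'

/-- The homogenization of `φ` along `x`. -/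
noncomputable def phix (φ : B → ℝ) (x : B) (f : B) : ℝ :=
  ⨅ n : ℕ, φ (f * x ^ n) / φ x ^ n

theorem phix_good [IsDomain B] {φ : B → ℝ} (hφ : GoodSN q m φ)
    (hm_pos : ∀ f, f ≠ 0 → 0 < m f)
    (hpow : ∀ (y : B) (k : ℕ), φ (y ^ k) = φ y ^ k)
    {x : B} (hx : x ≠ 0) :
    GoodSN q m (phix φ x) ∧ (∀ f, phix φ x f ≤ φ f) ∧
      (∀ f, phix φ x f ≤ φ (f * x) / φ x) := by
  have hφx : 0 < φ x := hφ.pos hm_pos hx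
  set b : B → ℕ → ℝ := fun f n => φ (f * x ^ n) / φ x ^ n with hb
  have hb_nonneg : ∀ f n, 0 ≤ b f n := fun f n => div_nonneg (hφ.nonneg _) (by positivity)
  have hb_anti : ∀ f, Antitone (b f) := by
    intro f
    refine antitone_nat_of_succ_le fun n => ?_
    show φ (f * x ^ (n + 1)) / φ x ^ (n + 1) ≤ φ (f * x ^ n) / φ x ^ n
    rw [div_le_div_iff₀ (by positivity) (by positivity)]
    have h1 : φ (f * x ^ (n + 1)) ≤ φ (f * x ^ n) * φ x := by
      have he : f * x ^ (n + 1) = (f * x ^ n) * x := by ring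
      rw [he]
      exact hφ.submul _ _
    calc φ (f * x ^ (n + 1)) * φ x ^ n ≤ (φ (f * x ^ n) * φ x) * φ x ^ n :=
          mul_le_mul_of_nonneg_right h1 (by positivity)
      _ = φ (f * x ^ n) * φ x ^ (n + 1) := by ring
  have hb_bdd : ∀ f, BddBelow (Set.range (b f)) := fun f => ⟨0, by
    rintro r ⟨n, rfl⟩; exact hb_nonneg f n⟩
  have hb_tend : ∀ f, Tendsto (b f) atTop (𝓝 (phix φ x f)) := fun f =>
    tendsto_atTop_ciInf (hb_anti f) (hb_bdd f)
  have hle_b0 : ∀ f, phix φ x f ≤ φ f := by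
    intro f
    have h0 := ciInf_le (hb_bdd f) 0
    simpa [hb, phix] using h0
  have hle_b1 : ∀ f, phix φ x f ≤ φ (f * x) / φ x := by
    intro f
    have h0 := ciInf_le (hb_bdd f) 1
    simpa [hb, phix] using h0
  have h2n : Tendsto (fun n : ℕ => 2 * n) atTop atTop :=
    tendsto_atTop_atTop_of_monotone (fun a b h => by omega) (fun c => ⟨c, by omega⟩)
  refine ⟨⟨?_, ?_, ?_, ?_, ?_, ?_, ?_, ?_⟩, hle_b0, hle_b1⟩
  · exact fun f => le_ciInf fun n => hb_nonneg f n
  · have hz : ∀ n, b 0 n = 0 := by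
      intro n; simp [hb, hφ.map_zero]
    calc phix φ x 0 = ⨅ n : ℕ, b 0 n := rfl
      _ = ⨅ _ : ℕ, (0:ℝ) := iInf_congr hz
      _ = 0 := ciInf_const
  · intro f
    refine iInf_congr fun n => ?_
    have he : -f * x ^ n = -(f * x ^ n) := by ring
    rw [he, hφ.map_neg]
  · intro f g
    refine le_of_tendsto_of_tendsto' (hb_tend (f + g)) ((hb_tend f).max (hb_tend g))
      fun n => ?_
    have h1 : (f + g) * x ^ n = f * x ^ n + g * x ^ n := by ring
    calc b (f + g) n = φ (f * x ^ n + g * x ^ n) / φ x ^ n := by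
          simp only [hb]; rw [h1]
      _ ≤ max (φ (f * x ^ n)) (φ (g * x ^ n)) / φ x ^ n :=
          (div_le_div_iff_of_pos_right (by positivity)).mpr (hφ.nonarch _ _)
      _ = max (b f n) (b g n) := by
          simp only [hb]; rw [max_div_div_right (by positivity : (0:ℝ) ≤ φ x ^ n)]
  · intro f g
    have T1 : Tendsto (fun n => b (f * g) (2 * n)) atTop (𝓝 (phix φ x (f * g))) :=
      (hb_tend (f * g)).comp h2n
    refine le_of_tendsto_of_tendsto' T1 ((hb_tend f).mul (hb_tend g)) fun n => ?_
    have h1 : (f * g) * x ^ (2 * n) = (f * x ^ n) * (g * x ^ n) := by ring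
    have h2 : φ x ^ (2 * n) = φ x ^ n * φ x ^ n := by rw [← pow_add, two_mul]
    show φ ((f * g) * x ^ (2 * n)) / φ x ^ (2 * n)
        ≤ (φ (f * x ^ n) / φ x ^ n) * (φ (g * x ^ n) / φ x ^ n)
    rw [h1, h2, div_mul_div_comm]
    exact (div_le_div_iff_of_pos_right (by positivity)).mpr (hφ.submul _ _)
  · have ho : ∀ n, b 1 n = 1 := by
      intro n
      show φ (1 * x ^ n) / φ x ^ n = 1
      rw [one_mul, hpow x n, div_self (by positivity)]
    calc phix φ x 1 = ⨅ n : ℕ, b 1 n := rfl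
      _ = ⨅ _ : ℕ, (1:ℝ) := iInf_congr ho
      _ = 1 := ciInf_const
  · exact fun f => (hle_b0 f).trans (hφ.le_q f)
  · intro f g hf
    refine le_of_tendsto_of_tendsto' ((hb_tend g).const_mul (m f)) (hb_tend (f * g))
      fun n => ?_
    show m f * (φ (g * x ^ n) / φ x ^ n) ≤ φ ((f * g) * x ^ n) / φ x ^ n
    rw [← mul_div_assoc]
    refine (div_le_div_iff_of_pos_right (by positivity)).mpr ?_
    have he : (f * g) * x ^ n = f * (g * x ^ n) := by ring
    rw [he]
    exact hφ.lower _ _ hf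

theorem minimal_mul [IsDomain B] {φ : B → ℝ} (hφ : GoodSN q m φ)
    (hmin : ∀ ψ : B → ℝ, GoodSN q m ψ → ψ ≤ φ → ψ = φ)
    (hm_pos : ∀ f, f ≠ 0 → 0 < m f)
    (hm_supmul : ∀ f g, f ≠ 0 → g ≠ 0 → m f * m g ≤ m (f * g))
    (hm_one : 1 ≤ m 1) : ∀ f y : B, φ (f * y) = φ f * φ y := by
  intro f y
  rcases eq_or_ne y 0 with rfl | hy
  · rw [mul_zero, hφ.map_zero, mul_zero]
  have hpow := minimal_pow_eq hφ hmin hm_pos hm_supmul hm_one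
  obtain ⟨hgood, hle, hb1⟩ := phix_good hφ hm_pos hpow hy
  have heq : phix φ y = φ := hmin _ hgood fun g => hle g
  have h1 : φ f ≤ φ (f * y) / φ y := by
    conv_lhs => rw [← heq]
    exact hb1 f
  have hφy : 0 < φ y := hφ.pos hm_pos hy
  have h2 : φ f * φ y ≤ φ (f * y) := (le_div_iff₀ hφy).mp h1
  exact le_antisymm (hφ.submul f y) h2

theorem exists_mult_goodSN [IsDomain B] (hq : GoodSN q m q)
    (hm_pos : ∀ f, f ≠ 0 → 0 < m f)
    (hm_supmul : ∀ f g, f ≠ 0 → g ≠ 0 → m f * m g ≤ m (f * g))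
    (hm_one : 1 ≤ m 1) :
    ∃ φ : B → ℝ, GoodSN q m φ ∧ ∀ f g : B, φ (f * g) = φ f * φ g := by
  obtain ⟨φ, hφ, hmin⟩ := exists_minimal_goodSN hq hm_pos
  exact ⟨φ, hφ, minimal_mul hφ hmin hm_pos hm_supmul hm_one⟩

end PhixPart

end Aux


theorem closed_prime_with_full_core_is_kernel' {A : Type*}
    [NormedCommRing A] [NormOneClass A]
    (hA : IsNonarchimedean (fun a : A => ‖a‖))
    (p : Ideal A) (hp : p.IsPrime) (hpc : IsClosed (p : Set A))
    (hcore : ∀ x : A ⧸ p, x ≠ 0 →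
      ∃ c > 0, ∀ f : A ⧸ p, quotSeminorm p f ≤ c * quotSeminorm p (f * x)) :
    ∃ φ : A → ℝ, (∀ f, 0 ≤ φ f) ∧ φ 0 = 0 ∧ φ 1 = 1 ∧ (∀ f, φ (-f) = φ f) ∧
      (∀ f g, φ (f + g) ≤ max (φ f) (φ g)) ∧ (∀ f g, φ (f * g) = φ f * φ g) ∧
      (∀ f, φ f ≤ ‖f‖) ∧ (∀ f, f ∈ p ↔ φ f = 0) := by
  haveI := hp
  set q : A ⧸ p → ℝ := quotSeminorm p with hqdef
  have hset_ne : ∀ y : A ⧸ p,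
      {r : ℝ | ∃ g : A, Ideal.Quotient.mk p g = y ∧ r = ‖g‖}.Nonempty := by
    intro y
    obtain ⟨g, rfl⟩ := Ideal.Quotient.mk_surjective y
    exact ⟨‖g‖, g, rfl, rfl⟩
  have hset_bdd : ∀ y : A ⧸ p,
      BddBelow {r : ℝ | ∃ g : A, Ideal.Quotient.mk p g = y ∧ r = ‖g‖} := by
    refine fun y => ⟨0, ?_⟩
    rintro r ⟨g, hg, rfl⟩
    exact norm_nonneg g
  have hq_nonneg : ∀ y, 0 ≤ q y := by
    intro y
    refine Real.sInf_nonneg ?_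
    rintro r ⟨g, hg, rfl⟩
    exact norm_nonneg g
  have hq_le : ∀ g : A, q (Ideal.Quotient.mk p g) ≤ ‖g‖ :=
    fun g => csInf_le (hset_bdd _) ⟨g, rfl, rfl⟩
  have hq_lt : ∀ (y : A ⧸ p) (t : ℝ), q y < t →
      ∃ g : A, Ideal.Quotient.mk p g = y ∧ ‖g‖ < t := by
    intro y t ht
    obtain ⟨r, ⟨g, hg, rfl⟩, hr⟩ := exists_lt_of_csInf_lt (hset_ne y) ht
    exact ⟨g, hg, hr⟩
  have hq_zero : q 0 = 0 := by
    refine le_antisymm ?_ (hq_nonneg 0)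
    have h0 := hq_le 0
    simpa using h0
  have hq_pos : ∀ y : A ⧸ p, y ≠ 0 → 0 < q y := by
    intro y hy
    rcases lt_or_eq_of_le (hq_nonneg y) with h | h
    · exact h
    exfalso
    obtain ⟨g, rfl⟩ := Ideal.Quotient.mk_surjective y
    have hmem : g ∈ closure (p : Set A) := by
      rw [Metric.mem_closure_iff]
      intro ε hε
      obtain ⟨g', hg', hn⟩ := hq_lt _ ε (by rw [← h]; exact hε)
      refine ⟨g - g', ?_, ?_⟩
      · simp only [SetLike.mem_coe]
        rw [← Ideal.Quotient.eq_zero_iff_mem, map_sub, hg', sub_self]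
      · rw [dist_eq_norm]
        simpa using hn
    rw [hpc.closure_eq] at hmem
    exact hy (Ideal.Quotient.eq_zero_iff_mem.mpr hmem)
  have hq_nonarch : ∀ y z, q (y + z) ≤ max (q y) (q z) := by
    intro y z
    refine le_of_forall_pos_le_add fun ε hε => ?_
    obtain ⟨g₁, hg₁, hn₁⟩ := hq_lt y (q y + ε) (by linarith)
    obtain ⟨g₂, hg₂, hn₂⟩ := hq_lt z (q z + ε) (by linarith)
    have hmk : Ideal.Quotient.mk p (g₁ + g₂) = y + z := by rw [map_add, hg₁, hg₂]
    calc q (y + z) ≤ ‖g₁ + g₂‖ := csInf_le (hset_bdd _) ⟨g₁ + g₂, hmk, rfl⟩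
      _ ≤ max ‖g₁‖ ‖g₂‖ := hA g₁ g₂
      _ ≤ max (q y + ε) (q z + ε) := max_le_max hn₁.le hn₂.le
      _ = max (q y) (q z) + ε := by rw [max_add_add_right]
  have hq_submul : ∀ y z, q (y * z) ≤ q y * q z := by
    intro y z
    refine le_mul_of_forall_eps (hq_nonneg y) (hq_nonneg z) fun ε hε => ?_
    obtain ⟨g₁, hg₁, hn₁⟩ := hq_lt y (q y + ε) (by linarith)
    obtain ⟨g₂, hg₂, hn₂⟩ := hq_lt z (q z + ε) (by linarith)
    have hmk : Ideal.Quotient.mk p (g₁ * g₂) = y * z := by rw [map_mul, hg₁, hg₂]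
    calc q (y * z) ≤ ‖g₁ * g₂‖ := csInf_le (hset_bdd _) ⟨g₁ * g₂, hmk, rfl⟩
      _ ≤ ‖g₁‖ * ‖g₂‖ := norm_mul_le _ _
      _ ≤ (q y + ε) * (q z + ε) := by
          have h1 := norm_nonneg g₁
          have h2 := norm_nonneg g₂
          nlinarith
  have hq_neg : ∀ y, q (-y) = q y := by
    intro y
    refine congrArg sInf (Set.ext fun r => ⟨?_, ?_⟩)
    · rintro ⟨g, hg, rfl⟩
      exact ⟨-g, by rw [map_neg, hg, neg_neg], (norm_neg g).symm⟩
    · rintro ⟨g, hg, rfl⟩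
      exact ⟨-g, by rw [map_neg, hg], (norm_neg g).symm⟩
  have hone_ne : (1 : A ⧸ p) ≠ 0 := one_ne_zero
  have hq_one : q 1 = 1 := by
    refine le_antisymm ?_ ?_
    · have h1 := hq_le 1
      simpa using h1
    · have hpos := hq_pos 1 hone_ne
      have h2 : q 1 ≤ q 1 * q 1 := by
        have := hq_submul 1 1
        simpa using this
      nlinarith
  -- the lower multiplicative bound
  set m : (A ⧸ p) → ℝ := fun x => sInf {r : ℝ | ∃ y : A ⧸ p, y ≠ 0 ∧ r = q (x * y) / q y}
    with hmdef
  have hmset_ne : ∀ x : A ⧸ p, {r : ℝ | ∃ y : A ⧸ p, y ≠ 0 ∧ r = q (x * y) / q y}.Nonempty :=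
    fun x => ⟨q (x * 1) / q 1, 1, hone_ne, rfl⟩
  have hmset_bdd : ∀ x : A ⧸ p,
      BddBelow {r : ℝ | ∃ y : A ⧸ p, y ≠ 0 ∧ r = q (x * y) / q y} := by
    refine fun x => ⟨0, ?_⟩
    rintro r ⟨y, hy, rfl⟩
    exact div_nonneg (hq_nonneg _) (hq_nonneg _)
  have hm_le : ∀ (x y : A ⧸ p), y ≠ 0 → m x ≤ q (x * y) / q y :=
    fun x y hy => csInf_le (hmset_bdd x) ⟨y, hy, rfl⟩
  have hm_pos : ∀ x : A ⧸ p, x ≠ 0 → 0 < m x := by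
    intro x hx
    obtain ⟨c, hc, hcf⟩ := hcore x hx
    have hlb : ∀ r ∈ {r : ℝ | ∃ y : A ⧸ p, y ≠ 0 ∧ r = q (x * y) / q y}, 1 / c ≤ r := by
      rintro r ⟨y, hy, rfl⟩
      have h1 : q y ≤ c * q (y * x) := hcf y
      rw [mul_comm y x] at h1
      have h2 : 0 < q y := hq_pos y hy
      rw [le_div_iff₀ h2]
      rw [div_mul_eq_mul_div, div_le_iff₀ hc, one_mul, mul_comm (q (x * y)) c]
      exact h1
    have := le_csInf (hmset_ne x) hlb
    exact lt_of_lt_of_le (by positivity) this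
  have hm_lower_q : ∀ f g : A ⧸ p, f ≠ 0 → m f * q g ≤ q (f * g) := by
    intro f g hf
    rcases eq_or_ne g 0 with rfl | hg
    · rw [mul_zero, hq_zero, mul_zero]
    · have h1 := hm_le f g hg
      rw [le_div_iff₀ (hq_pos g hg)] at h1
      exact h1
  have hm_one : 1 ≤ m 1 := by
    refine le_csInf (hmset_ne 1) ?_
    rintro r ⟨y, hy, rfl⟩
    rw [one_mul, div_self (hq_pos y hy).ne']
  have hm_supmul : ∀ f g : A ⧸ p, f ≠ 0 → g ≠ 0 → m f * m g ≤ m (f * g) := by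
    intro f g hf hg
    refine le_csInf (hmset_ne (f * g)) ?_
    rintro r ⟨y, hy, rfl⟩
    have hgy : g * y ≠ 0 := mul_ne_zero hg hy
    have h1 : m g * q y ≤ q (g * y) := hm_lower_q g y hg
    have h2 : m f * q (g * y) ≤ q (f * (g * y)) := hm_lower_q f (g * y) hf
    have h3 : f * (g * y) = f * g * y := by ring
    rw [h3] at h2
    rw [le_div_iff₀ (hq_pos y hy)]
    have hmf := (hm_pos f hf).le
    calc m f * m g * q y = m f * (m g * q y) := by ring
      _ ≤ m f * q (g * y) := mul_le_mul_of_nonneg_left h1 hmf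
      _ ≤ q (f * g * y) := h2
  have hq_good : GoodSN q m q :=
    ⟨hq_nonneg, hq_zero, hq_neg, hq_nonarch, hq_submul, hq_one, fun f => le_rfl, hm_lower_q⟩
  obtain ⟨φB, hφB, hmul⟩ := exists_mult_goodSN hq_good hm_pos hm_supmul hm_one
  refine ⟨fun a => φB (Ideal.Quotient.mk p a), fun f => hφB.nonneg _, ?_, ?_, ?_, ?_, ?_, ?_, ?_⟩
  · show φB (Ideal.Quotient.mk p 0) = 0
    rw [map_zero, hφB.map_zero]
  · show φB (Ideal.Quotient.mk p 1) = 1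
    rw [map_one, hφB.map_one]
  · intro f
    show φB (Ideal.Quotient.mk p (-f)) = φB (Ideal.Quotient.mk p f)
    rw [map_neg, hφB.map_neg]
  · intro f g
    show φB (Ideal.Quotient.mk p (f + g)) ≤ _
    rw [map_add]
    exact hφB.nonarch _ _
  · intro f g
    show φB (Ideal.Quotient.mk p (f * g)) = _
    rw [map_mul]
    exact hmul _ _
  · exact fun f => (hφB.le_q _).trans (hq_le f)
  · intro f
    constructor
    · intro hf
      show φB (Ideal.Quotient.mk p f) = 0
      rw [Ideal.Quotient.eq_zero_iff_mem.mpr hf, hφB.map_zero]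
    · intro hf
      by_contra hmem
      have hne : Ideal.Quotient.mk p f ≠ 0 := by
        rw [Ne, Ideal.Quotient.eq_zero_iff_mem]
        exact hmem
      exact absurd hf (hφB.pos hm_pos hne).ne'


/-- If `p` is a closed prime ideal of a Banach algebra over a nonarchimedean field such that
the quotient `A ⧸ p` with its quotient norm satisfies `Core(A/p) = A/p`, then `p` is the
kernel of some bounded multiplicative seminorm on `A`. -/
theorem closed_prime_with_full_core_is_kernel {K A : Type*}
    [NontriviallyNormedField K] [CompleteSpace K]
    (hK : IsNonarchimedean (fun x : K => ‖x‖))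
    [NormedCommRing A] [NormOneClass A] [NormedAlgebra K A] [CompleteSpace A]
    (hA : IsNonarchimedean (fun a : A => ‖a‖))
    (p : Ideal A) (hp : p.IsPrime) (hpc : IsClosed (p : Set A))
    (hcore : ∀ x : A ⧸ p, x ≠ 0 →
      ∃ c > 0, ∀ f : A ⧸ p, quotSeminorm p f ≤ c * quotSeminorm p (f * x)) :
    ∃ φ : A → ℝ, IsBddMulSeminorm φ ∧ ∀ f, f ∈ p ↔ φ f = 0 := by
  obtain ⟨φ, h1, h2, h3, h4, h5, h6, h7, h8⟩ :=
    closed_prime_with_full_core_is_kernel' hA p hp hpc hcore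
  exact ⟨φ, ⟨h1, h2, h3, h4, h5, h6,
    ⟨1, one_pos, fun f => by rw [one_mul]; exact h7 f⟩⟩, h8⟩
end
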